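/- arXiv:1805.05700 — 3 statements merged into one kernel-verified Lean document; each statement's English description precedes it below -/
import Mathlib

section
/- (Mayer expansion, single type) There exist constants c>0 and C>0 such that for all k>1, α∈(3/4,1] and z>0 with z k² ≤ c, and for every bounded measurable set S⊂ℝ³ and every type q∈{1,2,3}, the single-type partition function Z^q(S) is positive and satisfies |log Z^q(S) − 2z|S|| ≤ C z²k²|S|, i.e. log Z^q(S) = 2|S| z (1 + O(z k²)). -/
open MeasureTheory Filter

attribute [local instance] Classical.propDecidable

noncomputable section

/-! ## Basic geometry of hard plates -/

/-- a point of `ℝ³` -/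
abbrev Pt : Type := Fin 3 → ℝ

/-- an orientation: a type `i ∈ {1,2,3}` together with one of the two
assignments (`a` = `true`, `b` = `false`) of the sides `k^α` and `k`
to the two axes orthogonal to `i` -/
abbrev Orient : Type := Fin 3 × Bool

/-- a plate: a center together with an orientation -/
abbrev Plate : Type := Pt × Orient

/-- a block index in `ℤ³` -/
abbrev I3 : Type := Fin 3 → ℤ

/-- the side length, along the coordinate axis `j`, of a `1 × k^α × k` plate
with orientation `o`: side `1` along the axis `o.1`, and sides `k^α`, `k`
along the two other axes, in one of the two possible ways according to `o.2`. -/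
def sideLen (k α : ℝ) (o : Orient) (j : Fin 3) : ℝ :=
  if j = o.1 then 1
  else if j = o.1 + 1 then (if o.2 then k ^ α else k)
  else if o.2 then k else k ^ α

/-- the support `R_p` of a plate: the closed axis-aligned box centered at the
center of the plate, with side lengths `1, k^α, k` as prescribed by its orientation -/
def plSupport (k α : ℝ) (p : Plate) : Set Pt :=
  {y | ∀ j, |y j - p.1 j| ≤ sideLen k α p.2 j / 2}

/-- two plates intersect if their supports do -/
def Intersects (k α : ℝ) (p p' : Plate) : Prop :=
  (plSupport k α p ∩ plSupport k α p').Nonempty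

/-- hard-core pair interaction `φ(p,p')` -/
def phi2 (k α : ℝ) (p p' : Plate) : ℝ := if Intersects k α p p' then 0 else 1

/-- hard-core factor `φ(p_1,…,p_n) = ∏_{i<j} φ(p_i,p_j)` of a finite plate
configuration, given as a list -/
def phiL (k α : ℝ) : List Plate → ℝ
  | [] => 1
  | p :: ps => (ps.map (fun p' => phi2 k α p p')).prod * phiL k α ps

/-- hard-core interaction between two configurations -/
def crossL (k α : ℝ) (P Q : List Plate) : ℝ :=
  (P.map (fun p => (Q.map (fun p' => phi2 k α p p')).prod)).prod

/-- the plate configuration built from centers `x` and orientations `o` -/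
def mkConf {n : ℕ} (x : Fin n → Pt) (o : Fin n → Orient) : List Plate :=
  List.ofFn (fun m => (x m, o m))

/-- the Ursell function `φ^T(p_1,…,p_n)`: the sum over connected graphs on the
`n` labelled vertices (encoded by their edge sets, listed with `e.1 < e.2`) of
`∏_{{j,j'} ∈ E(g)} (φ(p_j,p_{j'}) - 1)`.  It equals `1` for `n = 1` and
vanishes for `n = 0`. -/
def ursell (k α : ℝ) {n : ℕ} (p : Fin n → Plate) : ℝ :=
  ∑ E : Finset (Fin n × Fin n),
    if (∀ e ∈ E, e.1 < e.2) ∧ (SimpleGraph.fromRel (fun i j => (i, j) ∈ E)).Connected then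
      ∏ e ∈ E, (phi2 k α (p e.1) (p e.2) - 1)
    else 0

/-- the two orientations of type `q` -/
def typeOrients (q : Fin 3) : Finset Orient := {(q, true), (q, false)}

/-! ## Partition functions of uniform systems -/

/-- grand-canonical partition function at activity `z` of plates with centers
in `S` and orientations in the finite set `O`:
`1 + ∑_{n≥1} (z^n/n!) ∫_{S^n} ∑_{orientations} φ(p_1,…,p_n)`
(the `n = 0` term of the series equals `1`). -/
def ZGen (k α z : ℝ) (S : Set Pt) (O : Finset Orient) : ℝ :=
  ∑' n : ℕ, (z ^ n / (Nat.factorial n : ℝ)) *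
    ∫ x : Fin n → Pt in Set.univ.pi (fun _ => S),
      ∑ o : Fin n → {a // a ∈ O}, phiL k α (mkConf x (fun m => (o m).1))

/-- partition function of plate configurations in `S` containing at least two
plates of different types -/
def Zge2 (k α z : ℝ) (S : Set Pt) : ℝ :=
  ∑' n : ℕ, (z ^ n / (Nat.factorial n : ℝ)) *
    ∫ x : Fin n → Pt in Set.univ.pi (fun _ => S),
      ∑ o : Fin n → Orient,
        (if ∃ i j : Fin n, (o i).1 ≠ (o j).1 then phiL k α (mkConf x o) else 0)

/-- the closed axis-aligned cube with center `c` and side `s` -/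
def cube (c : Pt) (s : ℝ) : Set Pt := {y | ∀ j, |y j - c j| ≤ s / 2}

/-- partition function of plate configurations with centers in `A ∪ B`, all
plates with center in `A` being of type `i` and all other plates of type `j` -/
def Zpair (k α z : ℝ) (i j : Fin 3) (A B : Set Pt) : ℝ :=
  ∑' n : ℕ, (z ^ n / (Nat.factorial n : ℝ)) *
    ∫ x : Fin n → Pt in Set.univ.pi (fun _ => A ∪ B),
      ∑ b : Fin n → Bool,
        phiL k α (mkConf x (fun m => ((if x m ∈ A then i else j), b m)))

/-- `Z^{≥2}(Δ₁ ∪ Δ₂)` for a dipole: sum over pairs of distinct types -/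
def Zdip (k α z : ℝ) (A B : Set Pt) : ℝ :=
  ∑ i : Fin 3, ∑ j : Fin 3, if i ≠ j then Zpair k α z i j A B else 0

/-! ## Pebbles -/

/-- the pebble with index `v` in the cube of corner `c` paved by cubes of
side `k^α/2` -/
def pebbleBox (k α : ℝ) {M : ℕ} (c : Pt) (v : Fin 3 → Fin M) : Set Pt :=
  {y | ∀ j, c j + (k ^ α / 2) * ((v j : ℕ) : ℝ) ≤ y j ∧
            y j ≤ c j + (k ^ α / 2) * (((v j : ℕ) : ℝ) + 1)}

/-- a pebble is typical of type `i` if it contains the centers of at least two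
plates of `P` of type `i` with different orientations -/
def TypicalIn (k α : ℝ) {M : ℕ} (c : Pt) (P : Finset Plate) (v : Fin 3 → Fin M)
    (i : Fin 3) : Prop :=
  ∃ p ∈ P, ∃ p' ∈ P, p.2 ≠ p'.2 ∧ p.2.1 = i ∧ p'.2.1 = i ∧
    p.1 ∈ pebbleBox k α c v ∧ p'.1 ∈ pebbleBox k α c v

/-- a pebble is atypical if it does not contain the centers of two plates of
`P` with different orientations -/
def AtypicalIn (k α : ℝ) {M : ℕ} (c : Pt) (P : Finset Plate) (v : Fin 3 → Fin M) : Prop :=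
  ¬ ∃ p ∈ P, ∃ p' ∈ P, p.2 ≠ p'.2 ∧ p.1 ∈ pebbleBox k α c v ∧ p'.1 ∈ pebbleBox k α c v

/-! ## Blocks, spins and conditioned partition functions -/

/-- the index of the (half-open) block of side `l` containing `x` -/
def blockIdx (l : ℝ) (x : Pt) : I3 := fun j => ⌊x j / l⌋

/-- the region of `ℝ³` paved by the blocks of side `ℓ = k/2` with indices in `B` -/
def regionOf (k : ℝ) (B : Finset I3) : Set Pt := {x | blockIdx (k / 2) x ∈ B}

/-- the closed region paved by the blocks with indices in `Y` -/
def regionClosed (k : ℝ) (Y : Finset I3) : Set Pt :=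
  {x | ∃ ξ ∈ Y, ∀ j, (k / 2) * (ξ j : ℝ) ≤ x j ∧ x j ≤ (k / 2) * ((ξ j : ℝ) + 1)}

/-- the block `ξ` is within rescaled `L^∞`-distance `r` of the complement of `B` -/
def nearBoundary (B : Finset I3) (r : ℤ) (ξ : I3) : Prop :=
  ∃ η : I3, η ∉ B ∧ ∀ j, |ξ j - η j| ≤ r

/-- the spin value (in `{0,1,2,3,4}`) corresponding to the plate type `i` -/
def spinOfType (i : Fin 3) : Fin 5 := ⟨i.1 + 1, by have := i.isLt; omega⟩

/-- the weight of the block `ξ` carrying the spin `s` in the presence of the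
plate configuration `P`: empty blocks get weight `1`, `-2`, `0` for
`s ∈ {1,2,3}`, `s = 0`, `s = 4` respectively, and nonempty blocks enforce the
compatibility of the plates they contain with the spin `s`. -/
def blockWeightL (l : ℝ) (P : List Plate) (ξ : I3) (s : Fin 5) : ℝ :=
  if ∀ p ∈ P, blockIdx l p.1 ≠ ξ then
    (if s = 0 then -2 else if s = 4 then 0 else 1)
  else if s = 4 then
    (if ∃ p ∈ P, ∃ p' ∈ P, blockIdx l p.1 = ξ ∧ blockIdx l p'.1 = ξ ∧ p.2.1 ≠ p'.2.1
     then 1 else 0)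
  else if ∃ i : Fin 3, s = spinOfType i ∧ ∀ p ∈ P, blockIdx l p.1 = ξ → p.2.1 = i
    then 1 else 0

/-- total compatibility weight of a plate configuration with a spin configuration -/
def confWeightL (l : ℝ) (B : Finset I3) (σ : I3 → Fin 5) (P : List Plate) : ℝ :=
  ∏ ξ ∈ B, blockWeightL l P ξ (σ ξ)

/-- extension (by `0`) of a spin configuration on `B` to all of `ℤ³` -/
def extFn (B : Finset I3) (σ : {ξ // ξ ∈ B} → Fin 5) : I3 → Fin 5 :=
  fun ξ => if h : ξ ∈ B then σ ⟨ξ, h⟩ else 0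

/-- indicator of the `q`-boundary condition: the spin equals `q` on every block
within rescaled `L^∞`-distance `8` of the complement of `B` -/
def bcWeight (B : Finset I3) (q : Fin 3) (σ : {ξ // ξ ∈ B} → Fin 5) : ℝ :=
  if ∀ ξ : {ξ // ξ ∈ B}, nearBoundary B 8 ξ.1 → σ ξ = spinOfType q then 1 else 0

/-- the partition function with `q`-boundary conditions on the union `Λ` of the
blocks indexed by `B`, with plate centers restricted to `Λ ∖ V` and with the
additional hard-core constraint that plates must not intersect the plates of
the fixed configuration `Pc`:
`Z = ∑_{σ ∈ Θ^q} ∫_{Ω_Λ(σ)} dP φ(P) z^{|P|} ∏_{p ∈ P, p' ∈ Pc} φ(p,p')`. -/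
def ZBCgen (k α z : ℝ) (B : Finset I3) (V : Set Pt) (q : Fin 3) (Pc : List Plate) : ℝ :=
  ∑ σ : {ξ // ξ ∈ B} → Fin 5,
    bcWeight B q σ *
      ∑' n : ℕ, (z ^ n / (Nat.factorial n : ℝ)) *
        ∫ x : Fin n → Pt in Set.univ.pi (fun _ => regionOf k B \ V),
          ∑ o : Fin n → Orient,
            confWeightL (k / 2) B (extFn B σ) (mkConf x o) * phiL k α (mkConf x o) *
              crossL k α (mkConf x o) Pc

/-- the `n`-point correlation function with `q`-boundary conditions,
`ρ_n^{(q,Λ)}(p_1,…,p_n) = Z(Λ|q)^{-1} ∑_{σ∈Θ^q} ∫_{Ω_Λ(σ)} dP z^{|P|+n} φ((p_1,…,p_n) ∪ P)` -/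
def corrBC (k α z : ℝ) (B : Finset I3) (V : Set Pt) (q : Fin 3) (Ps : List Plate) : ℝ :=
  (ZBCgen k α z B V q [])⁻¹ * z ^ Ps.length * phiL k α Ps * ZBCgen k α z B V q Ps

/-- an increasing sequence of cubic boxes invading `ℝ³`, each consisting of
`(8(m+1)-2)³` blocks (so that `L + 2ℓ` is divisible by `8ℓ`) -/
def boxB0 (m : ℕ) : Finset I3 :=
  Finset.Icc (fun _ => -(4 * (m : ℤ) + 3)) (fun _ => 4 * (m : ℤ) + 2)

/-- the cubic box with `(8m-2)³` blocks, aligned with the lattice of smoothing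
cubes (which exceed it by one block on each side) -/
def boxBm (m : ℕ) : Finset I3 :=
  Finset.Icc (fun _ => (-1 : ℤ)) (fun _ => 8 * (m : ℤ) - 4)

/-- `ε = max{(zk²)^{c₁}, e^{-c₂ z k^{2+α}}}` -/
def epsParam (k α z c1 c2 : ℝ) : ℝ :=
  max ((z * k ^ 2) ^ c1) (Real.exp (-(c2 * z * k ^ (2 + α))))

/-! ## Contours -/

/-- `D`-adjacency of blocks: distinct and touching on a face, an edge or a corner -/
def adjD (ξ η : I3) : Prop := ξ ≠ η ∧ ∀ j, |ξ j - η j| ≤ 1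

/-- reachability within a set of blocks through `D`-adjacency steps -/
def ReachIn (S : Finset I3) (ξ η : I3) : Prop :=
  Relation.ReflTransGen (fun a b => a ∈ S ∧ b ∈ S ∧ adjD a b) ξ η

/-- a nonempty `D`-connected set of blocks -/
def DConn (S : Finset I3) : Prop := S.Nonempty ∧ ∀ ξ ∈ S, ∀ η ∈ S, ReachIn S ξ η

/-- `Γ` is a `D`-connected component of `S` -/
def IsDComponent (S Γ : Finset I3) : Prop :=
  Γ ⊆ S ∧ DConn Γ ∧ ∀ ξ ∈ Γ, ∀ η ∈ S, adjD ξ η → η ∈ Γ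

/-- two sets of blocks are `D`-disconnected -/
def DDisj (A B : Finset I3) : Prop := ∀ ξ ∈ A, ∀ η ∈ B, ξ ≠ η ∧ ¬ adjD ξ η

/-- the combinatorial datum of a contour: its support (a set of blocks) and its
spin configuration (normalized to `0` outside the support) -/
structure Skeleton where
  Γ : Finset I3
  σ : I3 → Fin 5

/-- the blocks of the smoothing cube (of side `8ℓ`) with index `a` -/
def smoothBlocks (a : I3) : Finset I3 :=
  Finset.Icc (fun j => 8 * a j - 2) (fun j => 8 * a j + 5)

/-- the index of the smoothing cube containing the block `η` -/
def smoothIdx (η : I3) : I3 := fun j => Int.fdiv (η j + 2) 8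

/-- the sampling cube `S_ξ` (the `8` blocks `η` with `η j - ξ j ∈ {0,1}`) is
good: all its spins are equal and lie in `{1,2,3}` -/
def sampGood (B : Finset I3) (σ : I3 → Fin 5) (ξ : I3) : Prop :=
  ∃ i : Fin 3, ∀ η ∈ B, (∀ j, η j = ξ j ∨ η j = ξ j + 1) → σ η = spinOfType i

/-- the union `B(σ)` of the bad sampling cubes -/
def badBlocks (B : Finset I3) (σ : I3 → Fin 5) : Finset I3 :=
  B.filter (fun η => ∃ ξ ∈ B, ¬ sampGood B σ ξ ∧ ∀ j, η j = ξ j ∨ η j = ξ j + 1)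

/-- the union `B_s(σ)` of the smoothing cubes intersecting `B(σ)` -/
def smoothedBad (B : Finset I3) (σ : I3 → Fin 5) : Finset I3 :=
  (badBlocks B σ).biUnion (fun η => smoothBlocks (smoothIdx η))

/-- the bad region `B̄(σ)`: `B_s(σ)` together with all blocks at rescaled
`L^∞`-distance `≤ 1` from it -/
def barB (B : Finset I3) (σ : I3 → Fin 5) : Finset I3 :=
  B.filter (fun ξ => ∃ η ∈ smoothedBad B σ, ∀ j, |ξ j - η j| ≤ 1)

/-- the exterior of `Γ` in `B`: the blocks of `B ∖ Γ` connected to the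
boundary layer of `B` -/
def extBlocks (B Γ : Finset I3) : Finset I3 :=
  (B \ Γ).filter (fun ξ => ∃ η ∈ B \ Γ, nearBoundary B 1 η ∧ ReachIn (B \ Γ) ξ η)

/-- the interiors of `Γ` in `B`: the connected components of `B ∖ Γ` not
touching the boundary of `B` -/
def interiorsSet (B Γ : Finset I3) : Set (Finset I3) :=
  {A | IsDComponent (B \ Γ) A ∧ ∀ ξ ∈ A, ¬ nearBoundary B 1 ξ}

/-- the internal magnetization of the contour `s` on the interior `A`: the
common type prescribed by the spins of `s` on the layer of `Γ` adjacent to `A` -/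
def intMag (s : Skeleton) (A : Finset I3) : Fin 3 :=
  if h : ∃ i : Fin 3, ∀ ξ ∈ s.Γ, (∃ η ∈ A, adjD ξ η) → s.σ ξ = spinOfType i
  then h.choose else 0

/-- the external magnetization of the contour `s` is `q` -/
def extMagIs (B : Finset I3) (s : Skeleton) (q : Fin 3) : Prop :=
  ∀ ξ ∈ s.Γ, (∃ η ∈ extBlocks B s.Γ, adjD ξ η) → s.σ ξ = spinOfType q

/-- the skeleton `s` is a possible contour in `Λ` (associated to the block set
`B`) with `q`-boundary conditions: it arises from a spin configuration
`τ ∈ Θ^q` admitting a compatible plate configuration, as a `D`-connected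
component of the bad region `B̄(τ)`, with matching spins. -/
def PossibleSkel (k α : ℝ) (B : Finset I3) (q : Fin 3) (s : Skeleton) : Prop :=
  (∀ ξ, ξ ∉ s.Γ → s.σ ξ = 0) ∧
  ∃ τ : I3 → Fin 5,
    (∀ ξ ∈ B, nearBoundary B 8 ξ → τ ξ = spinOfType q) ∧
    (∃ P : List Plate, (∀ p ∈ P, p.1 ∈ regionOf k B) ∧
       confWeightL (k / 2) B τ P * phiL k α P ≠ 0) ∧
    IsDComponent (barB B τ) s.Γ ∧ (∀ ξ ∈ s.Γ, s.σ ξ = τ ξ)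

/-- the sub-configuration of the plates of `P` belonging to `Γ` -/
def restrictConf (l : ℝ) (Γ : Finset I3) (P : List Plate) : List Plate :=
  P.filter (fun p => decide (blockIdx l p.1 ∈ Γ))

/-- the function `F_γ(P)` for the contour with support `Γ` and plate
configuration `Pγ`: equal to `1` if `P` contains a plate belonging to `Λ ∖ Γ`
and a plate belonging to `Γ`, or a plate belonging to `Ext Γ` intersecting a
plate of `Pγ`; `0` otherwise. -/
def FgamL (k α : ℝ) (B Γ : Finset I3) (Pγ PQ : List Plate) : ℝ :=
  if (∃ p1 ∈ PQ, ∃ p2 ∈ PQ, blockIdx (k / 2) p1.1 ∉ Γ ∧ blockIdx (k / 2) p2.1 ∈ Γ) ∨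
     (∃ p1 ∈ PQ, blockIdx (k / 2) p1.1 ∈ extBlocks B Γ ∧ ∃ p2 ∈ Pγ, Intersects k α p1 p2)
  then 1 else 0

/-- `∫_{Ω^q_Λ} dP φ^T(P) z^{|P|} F_γ(P)`, the exponent of the dressing factor
of the contour activity -/
def dressInt (k α z : ℝ) (B : Finset I3) (q : Fin 3) (Γ : Finset I3) (Pγ : List Plate) : ℝ :=
  ∑' n : ℕ, (z ^ (n + 1) / (Nat.factorial (n + 1) : ℝ)) *
    ∫ x : Fin (n + 1) → Pt in Set.univ.pi (fun _ => regionOf k B),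
      ∑ b : Fin (n + 1) → Bool,
        ursell k α (fun m => (x m, (q, b m))) *
          FgamL k α B Γ Pγ (mkConf x (fun m => (q, b m)))

/-- the activity `ζ_q^{(Λ)}(γ)` of the contour `γ = (Γ, σ_γ, Pγ)`:
`(z^{|Pγ|} φ(Pγ)/Z^q(Γ)) ∏_j (Z^{(γ)}(Int_j Γ|m^j)/Z(Int_j Γ|q)) e^{-∫ φ^T z^{|P|} F_γ}` -/
def zetaL (k α z : ℝ) (B : Finset I3) (q : Fin 3) (s : Skeleton) (Pγ : List Plate) : ℝ :=
  (z ^ Pγ.length * phiL k α Pγ / ZGen k α z (regionOf k s.Γ) (typeOrients q)) *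
  (∏ᶠ A ∈ interiorsSet B s.Γ,
     ZBCgen k α z A ∅ (intMag s A) Pγ / ZBCgen k α z A ∅ q []) *
  Real.exp (-(dressInt k α z B q s.Γ Pγ))

/-- `∑_{n≥2} ((-1)^n/n!) ∑*_{γ_1,…,γ_n ∈ ∂ distinct} F_{γ_1}(P) ⋯ F_{γ_n}(P)`,
where the plate configuration of each contour is the restriction of `Pfull` to
its support -/
def multiF (k α : ℝ) (B : Finset I3) (D : Finset Skeleton) (Pfull Pq : List Plate) : ℝ :=
  ∑ r ∈ Finset.range (D.card + 1),
    if 2 ≤ r then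
      ((-1 : ℝ) ^ r / (Nat.factorial r : ℝ)) *
        ∑ g : Fin r → {s // s ∈ D},
          (if Function.Injective g then
            ∏ i : Fin r,
              FgamL k α B (g i).1.Γ (restrictConf (k / 2) (g i).1.Γ Pfull) Pq
          else 0)
    else 0

/-- the multi-contour interaction `W^{(Λ)}(∂)` -/
def Wfun (k α z : ℝ) (B : Finset I3) (q : Fin 3) (D : Finset Skeleton)
    (Pfull : List Plate) : ℝ :=
  ∑' n : ℕ, (z ^ (n + 1) / (Nat.factorial (n + 1) : ℝ)) *
    ∫ x : Fin (n + 1) → Pt in Set.univ.pi (fun _ => regionOf k B),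
      ∑ b : Fin (n + 1) → Bool,
        ursell k α (fun m => (x m, (q, b m))) *
          multiF k α B D Pfull (mkConf x (fun m => (q, b m)))

/-- a collection of possible contours, with pairwise `D`-disconnected supports,
all of whose external magnetizations equal `q` -/
def GoodContourConfig (k α : ℝ) (B : Finset I3) (q : Fin 3) (D : Finset Skeleton) : Prop :=
  (∀ s ∈ D, PossibleSkel k α B q s ∧ extMagIs B s q) ∧
  (∀ s ∈ D, ∀ t ∈ D, s ≠ t → DDisj s.Γ t.Γ)

/-- the sum `∑_{∂ ∈ C(Λ,q)} (∏_{γ∈∂} ζ_q^{(Λ)}(γ)) e^{W^{(Λ)}(∂)}` over contour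
configurations, the sum including the integration over the plate
configurations inside the contour supports -/
def contourSum (k α z : ℝ) (B : Finset I3) (q : Fin 3) : ℝ :=
  ∑ᶠ D ∈ {D : Finset Skeleton | D.Nonempty ∧ GoodContourConfig k α B q D},
    ∑' n : ℕ, (1 / (Nat.factorial n : ℝ)) *
      ∫ x : Fin n → Pt in Set.univ.pi (fun _ => regionOf k (D.biUnion Skeleton.Γ)),
        ∑ o : Fin n → Orient,
          (∏ s ∈ D,
            confWeightL (k / 2) s.Γ s.σ (restrictConf (k / 2) s.Γ (mkConf x o)) *
              zetaL k α z B q s (restrictConf (k / 2) s.Γ (mkConf x o))) *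
            Real.exp (Wfun k α z B q D (mkConf x o))

/-! ## Polymers -/

/-- the single-contour part `K_{q,1}^{(Λ)}(X)` of the polymer activity -/
def K1 (k α z : ℝ) (B : Finset I3) (q : Fin 3) (X : Finset I3) : ℝ :=
  ∑ᶠ s ∈ {s : Skeleton | PossibleSkel k α B q s ∧ extMagIs B s q ∧ s.Γ = X},
    ∑' n : ℕ, (1 / (Nat.factorial n : ℝ)) *
      ∫ x : Fin n → Pt in Set.univ.pi (fun _ => regionOf k X),
        ∑ o : Fin n → Orient,
          confWeightL (k / 2) X s.σ (mkConf x o) * zetaL k α z B q s (mkConf x o)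

/-- `𝕀_Y(P)`: `Y` is the smallest `D`-connected union of blocks containing the
supports of all plates of `P` -/
def IndY (k α : ℝ) (Y : Finset I3) (P : List Plate) : ℝ :=
  if DConn Y ∧ (∀ p ∈ P, plSupport k α p ⊆ regionClosed k Y) ∧
      (∀ Y' : Finset I3, Y' ⊆ Y → DConn Y' →
        (∀ p ∈ P, plSupport k α p ⊆ regionClosed k Y') → Y' = Y)
  then 1 else 0

/-- the localized multi-contour interaction `F_∂(Y)` -/
def Fcal (k α z : ℝ) (B : Finset I3) (q : Fin 3) (D : Finset Skeleton)
    (Pfull : List Plate) (Y : Finset I3) : ℝ :=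
  ∑' n : ℕ, (z ^ (n + 1) / (Nat.factorial (n + 1) : ℝ)) *
    ∫ x : Fin (n + 1) → Pt in Set.univ.pi (fun _ => regionOf k B),
      ∑ b : Fin (n + 1) → Bool,
        ursell k α (fun m => (x m, (q, b m))) *
          multiF k α B D Pfull (mkConf x (fun m => (q, b m))) *
          IndY k α Y (mkConf x (fun m => (q, b m)))

/-- `∑_{p≥1} (1/p!) ∑*_{Y_1,…,Y_p ∈ 𝔅^T(X) distinct, ∪Y_j = X₁} ∏_j (e^{F_∂(Y_j)} - 1)` -/
def Ysum (k α z : ℝ) (B : Finset I3) (q : Fin 3) (D : Finset Skeleton)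
    (X X1 : Finset I3) (Pfull : List Plate) : ℝ :=
  ∑' p : ℕ, (1 / (Nat.factorial (p + 1) : ℝ)) *
    ∑ Ys : Fin (p + 1) → {A // A ∈ X.powerset},
      (if Function.Injective Ys ∧ (∀ i, DConn (Ys i).1) ∧
          Finset.univ.sup (fun i => (Ys i).1) = X1
       then ∏ i, (Real.exp (Fcal k α z B q D Pfull (Ys i).1) - 1)
       else 0)

/-- the multi-contour part `K_{q,≥2}^{(Λ)}(X)` of the polymer activity -/
def Kge2 (k α z : ℝ) (B : Finset I3) (q : Fin 3) (X : Finset I3) : ℝ :=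
  ∑ X0 ∈ X.powerset, ∑ X1 ∈ X.powerset,
    (if X0 ∪ X1 = X then (1 : ℝ) else 0) *
      ∑ᶠ D ∈ {D : Finset Skeleton | 2 ≤ D.card ∧ GoodContourConfig k α B q D ∧
                D.biUnion Skeleton.Γ = X0},
        ∑' n : ℕ, (1 / (Nat.factorial n : ℝ)) *
          ∫ x : Fin n → Pt in Set.univ.pi (fun _ => regionOf k X0),
            ∑ o : Fin n → Orient,
              (∏ s ∈ D,
                confWeightL (k / 2) s.Γ s.σ (restrictConf (k / 2) s.Γ (mkConf x o)) *
                  zetaL k α z B q s (restrictConf (k / 2) s.Γ (mkConf x o))) *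
                Ysum k α z B q D X X1 (mkConf x o)

/-- the polymer activity `K_q^{(Λ)}(X) = K_{q,1}^{(Λ)}(X) + K_{q,≥2}^{(Λ)}(X)` -/
def Kpoly (k α z : ℝ) (B : Finset I3) (q : Fin 3) (X : Finset I3) : ℝ :=
  K1 k α z B q X + Kge2 k α z B q X

/-- the polymers of `Λ`: the nonempty `D`-connected unions of blocks of `B` -/
def polymers (B : Finset I3) : Finset (Finset I3) :=
  B.powerset.filter (fun A => DConn A)

/-- hard-core polymer interaction: `1` if `D`-disconnected, `0` otherwise -/
def polyPhi2 (A B : Finset I3) : ℝ := if DDisj A B then 1 else 0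

/-- the polymer Ursell function `φ^T(X_1,…,X_r)` -/
def polyUrsell {r : ℕ} (Xs : Fin r → Finset I3) : ℝ :=
  ∑ E : Finset (Fin r × Fin r),
    if (∀ e ∈ E, e.1 < e.2) ∧ (SimpleGraph.fromRel (fun i j => (i, j) ∈ E)).Connected then
      ∏ e ∈ E, (polyPhi2 (Xs e.1) (Xs e.2) - 1)
    else 0

/-- `∫_{Ω_Γ(σ_γ)} dP_γ |ζ_q^{(Λ)}(γ)|` -/
def contourAbsInt (k α z : ℝ) (B : Finset I3) (q : Fin 3) (s : Skeleton) : ℝ :=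
  ∑' n : ℕ, (1 / (Nat.factorial n : ℝ)) *
    ∫ x : Fin n → Pt in Set.univ.pi (fun _ => regionOf k s.Γ),
      ∑ o : Fin n → Orient,
        |confWeightL (k / 2) s.Γ s.σ (mkConf x o) * zetaL k α z B q s (mkConf x o)|

/-- `∫_{Ω_Γ(σ_γ)} dP_γ z^{|P_γ|} φ(P_γ) / Z^q(Γ)` -/
def contourPlateWeight (k α z : ℝ) (q : Fin 3) (s : Skeleton) : ℝ :=
  (∑' n : ℕ, (z ^ n / (Nat.factorial n : ℝ)) *
    ∫ x : Fin n → Pt in Set.univ.pi (fun _ => regionOf k s.Γ),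
      ∑ o : Fin n → Orient,
        confWeightL (k / 2) s.Γ s.σ (mkConf x o) * phiL k α (mkConf x o)) /
  ZGen k α z (regionOf k s.Γ) (typeOrients q)

/-- the admissible regions `𝔉nt`: connected regions obtained from a union of
smoothing cubes by removing all blocks at rescaled `L^∞`-distance `1` from the
complement -/
def Fnt : Set (Finset I3) :=
  {B | ∃ A : Finset I3, A.Nonempty ∧
        B = (A.biUnion smoothBlocks).filter
              (fun ξ => ¬ nearBoundary (A.biUnion smoothBlocks) 1 ξ) ∧
        DConn B}

/-- the one-point function of the pure type-`q` plate gas in `S`: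
`Z^q(S)^{-1} ∫_{Ω^q_S} dP z^{|P|+1} φ({p₀} ∪ P)` -/
def corrPure (k α z : ℝ) (S : Set Pt) (q : Fin 3) (p₀ : Plate) : ℝ :=
  (ZGen k α z S (typeOrients q))⁻¹ *
    ∑' n : ℕ, (z ^ (n + 1) / (Nat.factorial n : ℝ)) *
      ∫ x : Fin n → Pt in Set.univ.pi (fun _ => S),
        ∑ b : Fin n → Bool, phiL k α (p₀ :: mkConf x (fun m => (q, b m)))

/-! ## Auxiliary lemmas -/

section Aux

variable {k α : ℝ}

lemma sideLen_pos (hk : 0 < k) (o : Orient) (j : Fin 3) : 0 < sideLen k α o j := by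
  unfold sideLen
  split_ifs
  · norm_num
  · exact Real.rpow_pos_of_pos hk _
  · exact hk
  · exact hk
  · exact Real.rpow_pos_of_pos hk _

lemma sideLen_le (hk : 1 < k) (hα : α ≤ 1) (o : Orient) (j : Fin 3) :
    sideLen k α o j ≤ k := by
  have h1 : (1:ℝ) ≤ k := hk.le
  have h2 : k ^ α ≤ k := by
    calc k ^ α ≤ k ^ (1:ℝ) := Real.rpow_le_rpow_of_exponent_le h1 hα
    _ = k := Real.rpow_one k
  unfold sideLen
  split_ifs <;> first | exact h1 | exact h2 | exact le_refl k

lemma sideLen_axis (b : Bool) (q : Fin 3) : sideLen k α (q, b) q = 1 := by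
  simp [sideLen]

lemma intersects_iff (hk : 0 < k) (p p' : Plate) :
    Intersects k α p p' ↔
      ∀ j, |p.1 j - p'.1 j| ≤ (sideLen k α p.2 j + sideLen k α p'.2 j) / 2 := by
  constructor
  · rintro ⟨y, hy, hy'⟩ j
    have h1 := hy j
    have h2 := hy' j
    have := abs_sub_le (p.1 j) (y j) (p'.1 j)
    have e1 : |p.1 j - y j| = |y j - p.1 j| := abs_sub_comm _ _
    linarith
  · intro h
    refine ⟨fun j => max (p.1 j - sideLen k α p.2 j / 2)
      (p'.1 j - sideLen k α p'.2 j / 2), fun j => ?_, fun j => ?_⟩ <;>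
    · have hr := (sideLen_pos (α:=α) hk p.2 j).le
      have hr' := (sideLen_pos (α:=α) hk p'.2 j).le
      obtain ⟨hj1, hj2⟩ := abs_le.mp (h j)
      dsimp only
      rw [abs_le]
      rcases max_cases (p.1 j - sideLen k α p.2 j / 2)
        (p'.1 j - sideLen k α p'.2 j / 2) with ⟨he, hle⟩ | ⟨he, hle⟩ <;>
        rw [he] <;> constructor <;> linarith

lemma phi2_nonneg (p p' : Plate) : 0 ≤ phi2 k α p p' := by
  unfold phi2; split_ifs <;> norm_num

lemma phi2_le_one (p p' : Plate) : phi2 k α p p' ≤ 1 := by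
  unfold phi2; split_ifs <;> norm_num

lemma typeOrients_fst {q : Fin 3} {o : Orient} (h : o ∈ typeOrients q) : o.1 = q := by
  simp only [typeOrients, Finset.mem_insert, Finset.mem_singleton] at h
  rcases h with h | h <;> subst h <;> rfl

lemma card_typeOrients (q : Fin 3) : (typeOrients q).card = 2 := by
  simp [typeOrients]

lemma center_set_eq (hk : 0 < k) (o o' : Orient) (v : Pt) :
    {a : Pt | Intersects k α (a, o) (v, o')} =
      Set.univ.pi (fun j => Set.Icc
        (v j - (sideLen k α o j + sideLen k α o' j) / 2)
        (v j + (sideLen k α o j + sideLen k α o' j) / 2)) := by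
  ext a
  simp only [Set.mem_setOf_eq, intersects_iff hk, Set.mem_pi, Set.mem_univ,
    Set.mem_Icc, forall_true_left]
  refine forall_congr' fun j => ?_
  rw [abs_le]
  constructor <;> intro h <;> constructor <;> linarith [h.1, h.2]

lemma measurableSet_center (hk : 0 < k) (o o' : Orient) (v : Pt) :
    MeasurableSet {a : Pt | Intersects k α (a, o) (v, o')} := by
  rw [center_set_eq hk]
  exact MeasurableSet.univ_pi fun j => measurableSet_Icc

lemma prod_sides_le (hk : 1 < k) (hα : α ≤ 1) (q : Fin 3) (b b' : Bool) :
    ∏ j : Fin 3, (sideLen k α (q, b) j + sideLen k α (q, b') j) ≤ 8 * k ^ 2 := by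
  have h0 : (0:ℝ) < k := lt_trans one_pos hk
  have hle : ∀ j : Fin 3, sideLen k α (q, b) j + sideLen k α (q, b') j ≤
      (if j = q then 2 else 2 * k) := by
    intro j
    by_cases hj : j = q
    · subst hj; rw [sideLen_axis, sideLen_axis]; norm_num
    · simp only [hj, if_false]
      have := sideLen_le (α:=α) hk hα (q, b) j
      have := sideLen_le (α:=α) hk hα (q, b') j
      linarith
  calc ∏ j : Fin 3, (sideLen k α (q, b) j + sideLen k α (q, b') j)
      ≤ ∏ j : Fin 3, (if j = q then 2 else 2 * k) := by
        apply Finset.prod_le_prod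
        · intro j _
          have := (sideLen_pos (α:=α) h0 (q, b) j).le
          have := (sideLen_pos (α:=α) h0 (q, b') j).le
          linarith
        · exact fun j _ => hle j
    _ ≤ 8 * k ^ 2 := by
        rw [Fin.prod_univ_three]
        fin_cases q <;> simp <;> nlinarith

lemma volume_center_le (hk : 1 < k) (hα : α ≤ 1) (q : Fin 3) (b b' : Bool) (v : Pt) :
    volume {a : Pt | Intersects k α (a, (q, b)) (v, (q, b'))} ≤
      ENNReal.ofReal (8 * k ^ 2) := by
  have h0 : (0:ℝ) < k := lt_trans one_pos hk
  rw [center_set_eq h0, volume_pi_pi]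
  have hvol : ∀ j : Fin 3,
      volume (Set.Icc (v j - (sideLen k α (q,b) j + sideLen k α (q,b') j) / 2)
        (v j + (sideLen k α (q,b) j + sideLen k α (q,b') j) / 2)) =
      ENNReal.ofReal (sideLen k α (q,b) j + sideLen k α (q,b') j) := by
    intro j
    rw [Real.volume_Icc]
    congr 1
    ring
  simp only [hvol]
  rw [← ENNReal.ofReal_prod_of_nonneg]
  · exact ENNReal.ofReal_le_ofReal (prod_sides_le hk hα q b b')
  · intro j _
    have := (sideLen_pos (α:=α) h0 (q, b) j).le
    have := (sideLen_pos (α:=α) h0 (q, b') j).le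
    linarith

lemma integral_one_sub_phi2_le (hk : 1 < k) (hα : α ≤ 1) {S : Set Pt}
    (q : Fin 3) (b b' : Bool) (v : Pt) :
    ∫ a in S, (1 - phi2 k α (a, (q, b)) (v, (q, b'))) ≤ 8 * k ^ 2 := by
  have h0 : (0:ℝ) < k := lt_trans one_pos hk
  have hfun : (fun a : Pt => 1 - phi2 k α (a, (q, b)) (v, (q, b'))) =
      Set.indicator {a : Pt | Intersects k α (a, (q, b)) (v, (q, b'))}
        (fun _ => (1:ℝ)) := by
    ext a
    unfold phi2
    by_cases h : Intersects k α (a, (q, b)) (v, (q, b')) <;>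
      simp [h, Set.indicator_apply]
  rw [hfun, MeasureTheory.integral_indicator (measurableSet_center h0 _ _ _)]
  rw [MeasureTheory.setIntegral_const, smul_eq_mul, mul_one]
  rw [measureReal_def, Measure.restrict_apply (measurableSet_center h0 _ _ _)]
  apply ENNReal.toReal_le_of_le_ofReal (by positivity)
  calc volume ({a : Pt | Intersects k α (a, (q, b)) (v, (q, b'))} ∩ S)
      ≤ volume {a : Pt | Intersects k α (a, (q, b)) (v, (q, b'))} :=
        measure_mono Set.inter_subset_left
    _ ≤ ENNReal.ofReal (8 * k ^ 2) := volume_center_le hk hα q b b' v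

lemma integral_one_sub_phi2_nonneg {S : Set Pt} (p' : Plate) (oo : Orient) :
    0 ≤ ∫ a in S, (1 - phi2 k α (a, oo) p') := by
  apply MeasureTheory.integral_nonneg
  intro a
  have := phi2_le_one (k:=k) (α:=α) (a, oo) p'
  simp only [Pi.zero_apply]
  linarith

/-! ### phiL and mkConf -/

lemma phiL_cons (p : Plate) (P : List Plate) :
    phiL k α (p :: P) = (P.map (fun p' => phi2 k α p p')).prod * phiL k α P := rfl

lemma prod_map_phi2_mem (p : Plate) :
    ∀ P : List Plate, 0 ≤ (P.map (fun p' => phi2 k α p p')).prod ∧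
      (P.map (fun p' => phi2 k α p p')).prod ≤ 1
  | [] => by simp
  | p' :: P => by
      rcases prod_map_phi2_mem p P with ⟨h1, h2⟩
      simp only [List.map_cons, List.prod_cons]
      have h3 := phi2_nonneg (k := k) (α := α) p p'
      have h4 := phi2_le_one (k := k) (α := α) p p'
      exact ⟨mul_nonneg h3 h1, by nlinarith⟩

lemma phiL_mem : ∀ P : List Plate, 0 ≤ phiL k α P ∧ phiL k α P ≤ 1
  | [] => by norm_num [phiL]
  | p :: P => by
      rcases phiL_mem P with ⟨h1, h2⟩
      rcases prod_map_phi2_mem (k := k) (α := α) p P with ⟨h3, h4⟩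
      rw [phiL_cons]
      exact ⟨mul_nonneg h3 h1, by nlinarith⟩

lemma mkConf_succ {n : ℕ} (x : Fin (n+1) → Pt) (o : Fin (n+1) → Orient) :
    mkConf x o = (x 0, o 0) :: mkConf (fun m => x m.succ) (fun m => o m.succ) := by
  simp [mkConf, List.ofFn_succ]

lemma phiL_mkConf_succ {n : ℕ} (x : Fin (n+1) → Pt) (o : Fin (n+1) → Orient) :
    phiL k α (mkConf x o) =
      (∏ m : Fin n, phi2 k α (x 0, o 0) (x m.succ, o m.succ)) *
        phiL k α (mkConf (fun m => x m.succ) (fun m => o m.succ)) := by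
  rw [mkConf_succ, phiL_cons]
  congr 1
  rw [mkConf, List.map_ofFn, List.prod_ofFn]
  rfl

/-! ### measurability -/

lemma measurableSet_intersects_pair (hk : 0 < k) {n : ℕ} (i j : Fin n)
    (oi oj : Orient) :
    MeasurableSet {x : Fin n → Pt | Intersects k α (x i, oi) (x j, oj)} := by
  have heq : {x : Fin n → Pt | Intersects k α (x i, oi) (x j, oj)} =
      ⋂ m : Fin 3, {x : Fin n → Pt |
        |x i m - x j m| ≤ (sideLen k α oi m + sideLen k α oj m) / 2} := by
    ext x
    simp [intersects_iff hk, Set.mem_iInter]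
  rw [heq]
  apply MeasurableSet.iInter
  intro m
  have hm : Measurable fun x : Fin n → Pt => x i m - x j m :=
    Measurable.sub (f := fun x : Fin n → Pt => x i m) (g := fun x : Fin n → Pt => x j m)
      ((measurable_pi_apply m).comp (measurable_pi_apply i))
      ((measurable_pi_apply m).comp (measurable_pi_apply j))
  have heq2 : {x : Fin n → Pt |
      |x i m - x j m| ≤ (sideLen k α oi m + sideLen k α oj m) / 2} =
      (fun x : Fin n → Pt => x i m - x j m) ⁻¹'
        (Set.Icc (-((sideLen k α oi m + sideLen k α oj m) / 2))
          ((sideLen k α oi m + sideLen k α oj m) / 2)) := by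
    ext x
    simp [abs_le, Set.mem_Icc]
  rw [heq2]
  exact hm measurableSet_Icc

lemma measurable_phi2_pair (hk : 0 < k) {n : ℕ} (i j : Fin n) (oi oj : Orient) :
    Measurable fun x : Fin n → Pt => phi2 k α (x i, oi) (x j, oj) := by
  simp only [phi2]
  exact Measurable.ite (measurableSet_intersects_pair hk i j oi oj)
    measurable_const measurable_const

lemma measurable_phiL_mkConf (hk : 0 < k) :
    ∀ {n : ℕ} (o : Fin n → Orient),
      Measurable fun x : Fin n → Pt => phiL k α (mkConf x o)
  | 0, o => by
      have h : ∀ x : Fin 0 → Pt, phiL k α (mkConf x o) = 1 := by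
        intro x
        simp [mkConf, phiL]
      simp only [h]
      exact measurable_const
  | (n+1), o => by
      simp only [phiL_mkConf_succ]
      apply Measurable.mul
      · apply Finset.measurable_prod
        intro m _
        exact measurable_phi2_pair hk 0 m.succ (o 0) (o m.succ)
      · exact (measurable_phiL_mkConf hk (fun m => o m.succ)).comp
          (measurable_pi_lambda _ (fun m => measurable_pi_apply m.succ))

end Aux

/-! ### the basic integrals -/

def Fb (k α : ℝ) (q : Fin 3) (n : ℕ) (x : Fin n → Pt) : ℝ :=
  ∑ o : Fin n → {a // a ∈ typeOrients q}, phiL k α (mkConf x (fun m => (o m).1))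

def In (k α : ℝ) (S : Set Pt) (q : Fin 3) (n : ℕ) : ℝ :=
  ∫ x : Fin n → Pt in Set.univ.pi (fun _ => S), Fb k α q n x

section Aux2

variable {k α : ℝ}

lemma ZGen_eq_tsum_In (z : ℝ) (S : Set Pt) (q : Fin 3) :
    ZGen k α z S (typeOrients q) =
      ∑' n : ℕ, (z ^ n / (Nat.factorial n : ℝ)) * In k α S q n := rfl

lemma card_orient_fun (q : Fin 3) (n : ℕ) :
    Fintype.card (Fin n → {a // a ∈ typeOrients q}) = 2 ^ n := by
  rw [Fintype.card_fun, Fintype.card_coe, card_typeOrients, Fintype.card_fin]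

lemma Fb_nonneg (q : Fin 3) (n : ℕ) (x : Fin n → Pt) : 0 ≤ Fb k α q n x :=
  Finset.sum_nonneg fun o _ => (phiL_mem _).1

lemma Fb_le (q : Fin 3) (n : ℕ) (x : Fin n → Pt) : Fb k α q n x ≤ 2 ^ n := by
  calc Fb k α q n x ≤ ∑ _o : Fin n → {a // a ∈ typeOrients q}, (1:ℝ) :=
        Finset.sum_le_sum fun o _ => (phiL_mem _).2
    _ = 2 ^ n := by
        rw [Finset.sum_const, Finset.card_univ, card_orient_fun, nsmul_eq_mul,
          mul_one]
        push_cast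
        ring

lemma measurable_Fb (hk : 0 < k) (q : Fin 3) (n : ℕ) :
    Measurable (Fb k α q n) :=
  Finset.measurable_sum _ fun o _ => measurable_phiL_mkConf hk _

lemma volume_pi_S {S : Set Pt} (n : ℕ) :
    volume (Set.univ.pi fun _ : Fin n => S) = (volume S) ^ n := by
  rw [volume_pi_pi]
  simp

lemma integrableOn_Fb (hk : 0 < k) {S : Set Pt} (hSb : Bornology.IsBounded S)
    (q : Fin 3) (n : ℕ) :
    IntegrableOn (Fb k α q n) (Set.univ.pi fun _ : Fin n => S) volume := by
  apply Measure.integrableOn_of_bounded (M := 2 ^ n)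
  · rw [volume_pi_S]
    exact (ENNReal.pow_lt_top hSb.measure_lt_top).ne
  · exact (measurable_Fb hk q n).aestronglyMeasurable
  · apply Filter.Eventually.of_forall
    intro x
    rw [Real.norm_eq_abs, abs_of_nonneg (Fb_nonneg q n x)]
    exact Fb_le q n x

lemma In_nonneg (q : Fin 3) (n : ℕ) {S : Set Pt} : 0 ≤ In k α S q n :=
  MeasureTheory.integral_nonneg fun x => Fb_nonneg q n x

lemma In_le (hk : 0 < k) {S : Set Pt} (hSb : Bornology.IsBounded S)
    (q : Fin 3) (n : ℕ) :
    In k α S q n ≤ (2 * (volume S).toReal) ^ n := by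
  have h1 : In k α S q n ≤ ∫ _x : Fin n → Pt in Set.univ.pi (fun _ => S),
      ((2:ℝ) ^ n) := by
    apply MeasureTheory.integral_mono (integrableOn_Fb hk hSb q n)
    · have : IntegrableOn (fun _ : Fin n → Pt => (2:ℝ) ^ n)
          (Set.univ.pi fun _ => S) volume := by
        rw [MeasureTheory.integrableOn_const_iff]
        right
        rw [volume_pi_S]
        exact ENNReal.pow_lt_top hSb.measure_lt_top
      exact this
    · exact fun x => Fb_le q n x
  rw [MeasureTheory.setIntegral_const, measureReal_def, volume_pi_S, smul_eq_mul,
    ENNReal.toReal_pow] at h1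
  calc In k α S q n ≤ (volume S).toReal ^ n * 2 ^ n := h1
    _ = (2 * (volume S).toReal) ^ n := by rw [mul_pow]; ring

lemma Fb_zero (q : Fin 3) (x : Fin 0 → Pt) : Fb k α q 0 x = 1 := by
  rw [Fb]
  have h : ∀ o : Fin 0 → {a // a ∈ typeOrients q},
      phiL k α (mkConf x (fun m => (o m).1)) = 1 := by
    intro o
    simp [mkConf, phiL]
  rw [Finset.sum_congr rfl (fun o _ => h o), Finset.sum_const, Finset.card_univ,
    card_orient_fun]
  simp

lemma In_zero (q : Fin 3) {S : Set Pt} : In k α S q 0 = 1 := by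
  rw [In]
  rw [show (Fb k α q 0) = fun _ => (1:ℝ) from funext (Fb_zero q)]
  rw [MeasureTheory.setIntegral_const, measureReal_def, volume_pi_S]
  simp

/-! ### Weierstrass product bound -/

lemma weierstrass {ι : Type*} (s : Finset ι) (w : ι → ℝ)
    (h : ∀ i ∈ s, 0 ≤ w i ∧ w i ≤ 1) :
    1 - ∑ i ∈ s, (1 - w i) ≤ ∏ i ∈ s, w i := by
  classical
  induction s using Finset.induction with
  | empty => simp
  | @insert x s hx ih =>
      rw [Finset.prod_insert hx, Finset.sum_insert hx]
      obtain ⟨h1, h2⟩ := h x (Finset.mem_insert_self x s)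
      have h3 : ∀ i ∈ s, 0 ≤ w i ∧ w i ≤ 1 :=
        fun i hi => h i (Finset.mem_insert_of_mem hi)
      have h4 := ih h3
      have h5 : 0 ≤ ∏ i ∈ s, w i :=
        Finset.prod_nonneg fun i hi => (h3 i hi).1
      have h6 : ∏ i ∈ s, w i ≤ 1 :=
        Finset.prod_le_one (fun i hi => (h3 i hi).1) (fun i hi => (h3 i hi).2)
      nlinarith

/-! ### one-center measurability and integrability -/

lemma measurable_phi2_center (hk : 0 < k) (oo : Orient) (p' : Plate) :
    Measurable fun a : Pt => phi2 k α (a, oo) p' := by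
  simp only [phi2]
  have h : MeasurableSet {a : Pt | Intersects k α (a, oo) p'} := by
    have : {a : Pt | Intersects k α (a, oo) p'} =
        {a : Pt | Intersects k α (a, oo) (p'.1, p'.2)} := by simp
    rw [this]
    exact measurableSet_center hk oo p'.2 p'.1
  exact Measurable.ite h measurable_const measurable_const

lemma integrableOn_phi2_center (hk : 0 < k) {S : Set Pt}
    (hSb : Bornology.IsBounded S) (oo : Orient) (p' : Plate) :
    IntegrableOn (fun a : Pt => phi2 k α (a, oo) p') S volume := by
  apply Measure.integrableOn_of_bounded (M := 1) hSb.measure_lt_top.ne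
  · exact (measurable_phi2_center hk oo p').aestronglyMeasurable
  · apply Filter.Eventually.of_forall
    intro a
    rw [Real.norm_eq_abs, abs_of_nonneg (phi2_nonneg _ _)]
    exact phi2_le_one _ _

/-! ### the key one-step estimate -/

lemma inner_bound (hk : 1 < k) (hα : α ≤ 1) {S : Set Pt}
    (hSb : Bornology.IsBounded S) (q : Fin 3) {n : ℕ} (b : Fin n → Pt) :
    (2 * (volume S).toReal - 16 * k ^ 2 * n) * Fb k α q n b ≤
      ∫ a in S, Fb k α q (n + 1) (Fin.insertNth (α := fun _ => Pt) 0 a b) := by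
  classical
  have h0 : (0:ℝ) < k := lt_trans one_pos hk
  haveI : IsFiniteMeasure (volume.restrict S) :=
    ⟨by rw [Measure.restrict_apply_univ]; exact hSb.measure_lt_top⟩
  have hins0 : ∀ a : Pt, (Fin.insertNth (α := fun _ => Pt) (0 : Fin (n+1)) a b) 0 = a :=
    fun a => Fin.insertNth_apply_same (α := fun _ => Pt) 0 a b
  have hinss : ∀ (a : Pt) (m : Fin n),
      (Fin.insertNth (α := fun _ => Pt) (0 : Fin (n+1)) a b) m.succ = b m :=
    fun a m => Fin.insertNth_apply_succAbove (α := fun _ => Pt) 0 a b m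
  -- decomposition of `Fb (n+1)`
  have hdecomp : ∀ a : Pt, Fb k α q (n+1) (Fin.insertNth (α := fun _ => Pt) 0 a b) =
      ∑ u : {a' // a' ∈ typeOrients q}, ∑ ot : Fin n → {a' // a' ∈ typeOrients q},
        (∏ m : Fin n, phi2 k α (a, u.1) (b m, (ot m).1)) *
          phiL k α (mkConf b (fun m => (ot m).1)) := by
    intro a
    rw [Fb, ← Equiv.sum_comp (Fin.consEquiv (fun _ : Fin (n+1) => {a' // a' ∈ typeOrients q}))
      (fun o => phiL k α (mkConf (Fin.insertNth (α := fun _ => Pt) 0 a b) (fun m => (o m).1))),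
      Fintype.sum_prod_type]
    apply Finset.sum_congr rfl
    intro u _
    apply Finset.sum_congr rfl
    intro ot _
    rw [phiL_mkConf_succ]
    simp only [Fin.consEquiv_apply, Fin.cons_zero, Fin.cons_succ, hins0, hinss]
  -- pointwise lower bound
  have hptwise : ∀ a : Pt,
      (∑ u : {a' // a' ∈ typeOrients q}, ∑ ot : Fin n → {a' // a' ∈ typeOrients q},
        (phiL k α (mkConf b (fun m => (ot m).1)) -
          (∑ m : Fin n, (1 - phi2 k α (a, u.1) (b m, (ot m).1))) *
            phiL k α (mkConf b (fun m => (ot m).1)))) ≤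
      Fb k α q (n+1) (Fin.insertNth (α := fun _ => Pt) 0 a b) := by
    intro a
    rw [hdecomp a]
    apply Finset.sum_le_sum
    intro u _
    apply Finset.sum_le_sum
    intro ot _
    have hT := phiL_mem (k := k) (α := α) (mkConf b (fun m => (ot m).1))
    have hW := weierstrass Finset.univ
      (fun m => phi2 k α (a, u.1) (b m, (ot m).1))
      (fun m _ => ⟨phi2_nonneg _ _, phi2_le_one _ _⟩)
    have hmul := mul_le_mul_of_nonneg_right hW hT.1
    nlinarith [hmul]
  -- integrability
  have hmeas_ins : Measurable fun a : Pt => Fin.insertNth (α := fun _ => Pt) (0 : Fin (n+1)) a b := by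
    apply measurable_pi_lambda
    intro i
    refine Fin.cases ?_ ?_ i
    · simp only [hins0]; exact measurable_id
    · intro m; simp only [hinss]; exact measurable_const
  have hint1 : IntegrableOn (fun a => Fb k α q (n+1) (Fin.insertNth (α := fun _ => Pt) 0 a b)) S volume := by
    apply Measure.integrableOn_of_bounded (M := 2 ^ (n+1)) hSb.measure_lt_top.ne
    · exact ((measurable_Fb h0 q (n+1)).comp hmeas_ins).aestronglyMeasurable
    · exact Filter.Eventually.of_forall fun a => by
        rw [Real.norm_eq_abs, abs_of_nonneg (Fb_nonneg _ _ _)]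
        exact Fb_le _ _ _
  have hint_term : ∀ (u : {a' // a' ∈ typeOrients q}) (ot : Fin n → {a' // a' ∈ typeOrients q}),
      IntegrableOn (fun a : Pt => phiL k α (mkConf b (fun m => (ot m).1)) -
        (∑ m : Fin n, (1 - phi2 k α (a, u.1) (b m, (ot m).1))) *
          phiL k α (mkConf b (fun m => (ot m).1))) S volume := by
    intro u ot
    apply Integrable.sub (integrable_const _)
    apply Integrable.mul_const
    apply integrable_finset_sum
    intro m _
    exact Integrable.sub (integrable_const 1) (integrableOn_phi2_center h0 hSb u.1 (b m, (ot m).1))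
  have hint2 : IntegrableOn (fun a : Pt =>
      ∑ u : {a' // a' ∈ typeOrients q}, ∑ ot : Fin n → {a' // a' ∈ typeOrients q},
        (phiL k α (mkConf b (fun m => (ot m).1)) -
          (∑ m : Fin n, (1 - phi2 k α (a, u.1) (b m, (ot m).1))) *
            phiL k α (mkConf b (fun m => (ot m).1)))) S volume := by
    apply integrable_finset_sum
    intro u _
    apply integrable_finset_sum
    intro ot _
    exact hint_term u ot
  -- computation of the lower integral
  have hcompute : (∫ a in S,
      ∑ u : {a' // a' ∈ typeOrients q}, ∑ ot : Fin n → {a' // a' ∈ typeOrients q},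
        (phiL k α (mkConf b (fun m => (ot m).1)) -
          (∑ m : Fin n, (1 - phi2 k α (a, u.1) (b m, (ot m).1))) *
            phiL k α (mkConf b (fun m => (ot m).1)))) =
      ∑ u : {a' // a' ∈ typeOrients q}, ∑ ot : Fin n → {a' // a' ∈ typeOrients q},
        ((volume S).toReal * phiL k α (mkConf b (fun m => (ot m).1)) -
          (∑ m : Fin n, ∫ a in S, (1 - phi2 k α (a, u.1) (b m, (ot m).1))) *
            phiL k α (mkConf b (fun m => (ot m).1))) := by
    rw [MeasureTheory.integral_finset_sum _ (fun u _ => integrable_finset_sum _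
      (fun ot _ => hint_term u ot))]
    apply Finset.sum_congr rfl
    intro u _
    rw [MeasureTheory.integral_finset_sum _ (fun ot _ => hint_term u ot)]
    apply Finset.sum_congr rfl
    intro ot _
    have hphi : ∀ m : Fin n, IntegrableOn
        (fun a : Pt => 1 - phi2 k α (a, u.1) (b m, (ot m).1)) S volume := by
      intro m
      exact (integrable_const (1:ℝ)).sub (integrableOn_phi2_center h0 hSb u.1 (b m, (ot m).1))
    have hsum' : IntegrableOn
        (fun a : Pt => ∑ m : Fin n, (1 - phi2 k α (a, u.1) (b m, (ot m).1))) S volume :=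
      integrable_finset_sum _ (fun m _ => hphi m)
    have hmul : IntegrableOn (fun a : Pt =>
        (∑ m : Fin n, (1 - phi2 k α (a, u.1) (b m, (ot m).1))) *
          phiL k α (mkConf b (fun m => (ot m).1))) S volume := hsum'.mul_const _
    rw [MeasureTheory.integral_sub (integrable_const _) hmul]
    rw [MeasureTheory.setIntegral_const, smul_eq_mul]
    congr 1
    rw [MeasureTheory.integral_mul_const]
    congr 1
    rw [MeasureTheory.integral_finset_sum _ (fun m _ => hphi m)]
  -- bound on the excluded-volume sums
  have hIm : ∀ (u : {a' // a' ∈ typeOrients q}) (ot : Fin n → {a' // a' ∈ typeOrients q})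
      (m : Fin n), ∫ a in S, (1 - phi2 k α (a, u.1) (b m, (ot m).1)) ≤ 8 * k ^ 2 := by
    intro u ot m
    have hu : u.1 = (q, u.1.2) := Prod.ext (typeOrients_fst u.2) rfl
    have hot : (ot m).1 = (q, ((ot m).1).2) := Prod.ext (typeOrients_fst (ot m).2) rfl
    rw [hu, hot]
    exact integral_one_sub_phi2_le hk hα q _ _ (b m)
  -- final chain
  have hsum_ot : ∀ u : {a' // a' ∈ typeOrients q},
      ∑ ot : Fin n → {a' // a' ∈ typeOrients q},
        phiL k α (mkConf b (fun m => (ot m).1)) = Fb k α q n b := fun u => rfl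
  have hfinal : (2 * (volume S).toReal - 16 * k ^ 2 * n) * Fb k α q n b ≤
      ∑ u : {a' // a' ∈ typeOrients q}, ∑ ot : Fin n → {a' // a' ∈ typeOrients q},
        ((volume S).toReal * phiL k α (mkConf b (fun m => (ot m).1)) -
          (∑ m : Fin n, ∫ a in S, (1 - phi2 k α (a, u.1) (b m, (ot m).1))) *
            phiL k α (mkConf b (fun m => (ot m).1))) := by
    have hstep : ∀ (u : {a' // a' ∈ typeOrients q}) (ot : Fin n → {a' // a' ∈ typeOrients q}),
        ((volume S).toReal - 8 * k ^ 2 * n) * phiL k α (mkConf b (fun m => (ot m).1)) ≤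
        ((volume S).toReal * phiL k α (mkConf b (fun m => (ot m).1)) -
          (∑ m : Fin n, ∫ a in S, (1 - phi2 k α (a, u.1) (b m, (ot m).1))) *
            phiL k α (mkConf b (fun m => (ot m).1))) := by
      intro u ot
      have hT := phiL_mem (k := k) (α := α) (mkConf b (fun m => (ot m).1))
      have hsumIm : (∑ m : Fin n, ∫ a in S, (1 - phi2 k α (a, u.1) (b m, (ot m).1))) ≤
          8 * k ^ 2 * n := by
        calc (∑ m : Fin n, ∫ a in S, (1 - phi2 k α (a, u.1) (b m, (ot m).1)))
            ≤ ∑ _m : Fin n, 8 * k ^ 2 := Finset.sum_le_sum fun m _ => hIm u ot m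
          _ = 8 * k ^ 2 * n := by
              rw [Finset.sum_const, Finset.card_univ, Fintype.card_fin, nsmul_eq_mul]
              ring
      nlinarith [mul_le_mul_of_nonneg_right hsumIm hT.1]
    calc (2 * (volume S).toReal - 16 * k ^ 2 * n) * Fb k α q n b
        = ∑ u : {a' // a' ∈ typeOrients q}, ((volume S).toReal - 8 * k ^ 2 * n) *
            ∑ ot : Fin n → {a' // a' ∈ typeOrients q},
              phiL k α (mkConf b (fun m => (ot m).1)) := by
          rw [Finset.sum_const, Finset.card_univ]
          have hc : Fintype.card {a' // a' ∈ typeOrients q} = 2 := by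
            rw [Fintype.card_coe, card_typeOrients]
          rw [hc, hsum_ot ⟨(q, true), by simp [typeOrients]⟩]
          push_cast
          ring
      _ ≤ _ := by
          apply Finset.sum_le_sum
          intro u _
          rw [Finset.mul_sum]
          apply Finset.sum_le_sum
          intro ot _
          exact hstep u ot
  calc (2 * (volume S).toReal - 16 * k ^ 2 * n) * Fb k α q n b
      ≤ ∑ u : {a' // a' ∈ typeOrients q}, ∑ ot : Fin n → {a' // a' ∈ typeOrients q},
        ((volume S).toReal * phiL k α (mkConf b (fun m => (ot m).1)) -
          (∑ m : Fin n, ∫ a in S, (1 - phi2 k α (a, u.1) (b m, (ot m).1))) *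
            phiL k α (mkConf b (fun m => (ot m).1))) := hfinal
    _ = ∫ a in S,
        ∑ u : {a' // a' ∈ typeOrients q}, ∑ ot : Fin n → {a' // a' ∈ typeOrients q},
          (phiL k α (mkConf b (fun m => (ot m).1)) -
            (∑ m : Fin n, (1 - phi2 k α (a, u.1) (b m, (ot m).1))) *
              phiL k α (mkConf b (fun m => (ot m).1))) := hcompute.symm
    _ ≤ ∫ a in S, Fb k α q (n+1) (Fin.insertNth (α := fun _ => Pt) 0 a b) :=
        MeasureTheory.integral_mono hint2 hint1 hptwise

lemma In_succ_ge (hk : 1 < k) (hα : α ≤ 1) {S : Set Pt}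
    (hSb : Bornology.IsBounded S) (q : Fin 3) (n : ℕ) :
    (2 * (volume S).toReal - 16 * k ^ 2 * n) * In k α S q n ≤ In k α S q (n + 1) := by
  classical
  have h0 : (0:ℝ) < k := lt_trans one_pos hk
  haveI hfin1 : IsFiniteMeasure ((volume : Measure Pt).restrict S) :=
    ⟨by rw [Measure.restrict_apply_univ]; exact hSb.measure_lt_top⟩
  haveI hfin2 : IsFiniteMeasure
      ((volume : Measure (Fin n → Pt)).restrict (Set.univ.pi fun _ => S)) :=
    ⟨by rw [Measure.restrict_apply_univ, volume_pi_S]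
        exact ENNReal.pow_lt_top hSb.measure_lt_top⟩
  set e := MeasurableEquiv.piFinSuccAbove (fun _ : Fin (n+1) => Pt) 0 with he
  have hmp : MeasurePreserving e volume
      ((volume : Measure Pt).prod (volume : Measure (Fin n → Pt))) :=
    measurePreserving_piFinSuccAbove (fun _ => (volume : Measure Pt)) 0
  have hsymm : ∀ (a : Pt) (bb : Fin n → Pt),
      e.symm (a, bb) = Fin.insertNth (α := fun _ => Pt) 0 a bb := fun a bb => rfl
  have hpre : (Set.univ.pi fun _ : Fin (n+1) => S) =
      e ⁻¹' (S ×ˢ Set.univ.pi fun _ : Fin n => S) := by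
    ext x
    simp only [Set.mem_preimage, Set.mem_prod, Set.mem_pi, Set.mem_univ,
      forall_true_left, he, MeasurableEquiv.piFinSuccAbove]
    constructor
    · intro hx
      exact ⟨hx 0, fun j => hx _⟩
    · rintro ⟨h1, h2⟩ i
      refine Fin.cases ?_ ?_ i
      · exact h1
      · exact fun m => h2 m
  have hG : Integrable (fun y : Pt × (Fin n → Pt) => Fb k α q (n+1) (e.symm y))
      (((volume : Measure Pt).restrict S).prod
        ((volume : Measure (Fin n → Pt)).restrict (Set.univ.pi fun _ => S))) := by
    apply Integrable.mono' (integrable_const ((2:ℝ) ^ (n+1)))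
    · exact ((measurable_Fb h0 q (n+1)).comp e.symm.measurable).aestronglyMeasurable
    · apply Filter.Eventually.of_forall
      intro y
      rw [Real.norm_eq_abs, abs_of_nonneg (Fb_nonneg _ _ _)]
      exact Fb_le _ _ _
  have h1 : In k α S q (n+1) = ∫ y : Pt × (Fin n → Pt),
      Fb k α q (n+1) (e.symm y)
      ∂(((volume : Measure Pt).restrict S).prod
        ((volume : Measure (Fin n → Pt)).restrict (Set.univ.pi fun _ => S))) := by
    rw [In, hpre, Measure.prod_restrict]
    calc ∫ x in e ⁻¹' (S ×ˢ Set.univ.pi fun _ : Fin n => S), Fb k α q (n+1) x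
        = ∫ x in e ⁻¹' (S ×ˢ Set.univ.pi fun _ : Fin n => S),
            (fun y => Fb k α q (n+1) (e.symm y)) (e x) := by
          simp only [MeasurableEquiv.symm_apply_apply]
      _ = ∫ y in S ×ˢ Set.univ.pi fun _ : Fin n => S, Fb k α q (n+1) (e.symm y)
            ∂((volume : Measure Pt).prod (volume : Measure (Fin n → Pt))) :=
          hmp.setIntegral_preimage_emb e.measurableEmbedding
            (fun y => Fb k α q (n+1) (e.symm y)) (S ×ˢ Set.univ.pi fun _ => S)
  rw [h1, MeasureTheory.integral_prod_symm _ hG]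
  have h2 : ∀ bb : Fin n → Pt,
      (2 * (volume S).toReal - 16 * k ^ 2 * n) * Fb k α q n bb ≤
        ∫ a in S, Fb k α q (n+1) (e.symm (a, bb)) := by
    intro bb
    simp only [hsymm]
    exact inner_bound hk hα hSb q bb
  calc (2 * (volume S).toReal - 16 * k ^ 2 * n) * In k α S q n
      = ∫ bb in Set.univ.pi fun _ : Fin n => S,
          (2 * (volume S).toReal - 16 * k ^ 2 * n) * Fb k α q n bb := by
        rw [In, MeasureTheory.integral_const_mul]
    _ ≤ ∫ bb in Set.univ.pi fun _ : Fin n => S,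
          ∫ a in S, Fb k α q (n+1) (e.symm (a, bb)) := by
        apply MeasureTheory.integral_mono
          ((integrableOn_Fb h0 hSb q n).const_mul _) hG.integral_prod_right h2

/-! ### series estimates -/

lemma exp_tsum (x : ℝ) : ∑' n : ℕ, x ^ n / (Nat.factorial n : ℝ) = Real.exp x := by
  rw [Real.exp_eq_exp_ℝ, NormedSpace.exp_eq_tsum_div]

lemma term_nonneg (hz : 0 ≤ z) {S : Set Pt} (q : Fin 3) (n : ℕ) :
    0 ≤ z ^ n / (Nat.factorial n : ℝ) * In k α S q n := by
  have h1 : (0:ℝ) ≤ z ^ n / (Nat.factorial n : ℝ) := by positivity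
  exact mul_nonneg h1 (In_nonneg q n)

lemma term_le (hz : 0 ≤ z) {S : Set Pt} (hk : 0 < k)
    (hSb : Bornology.IsBounded S) (q : Fin 3) (n : ℕ) :
    z ^ n / (Nat.factorial n : ℝ) * In k α S q n ≤
      (z * (2 * (volume S).toReal)) ^ n / (Nat.factorial n : ℝ) := by
  have h1 : (0:ℝ) ≤ z ^ n / (Nat.factorial n : ℝ) := by positivity
  calc z ^ n / (Nat.factorial n : ℝ) * In k α S q n
      ≤ z ^ n / (Nat.factorial n : ℝ) * (2 * (volume S).toReal) ^ n :=
        mul_le_mul_of_nonneg_left (In_le hk hSb q n) h1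
    _ = (z * (2 * (volume S).toReal)) ^ n / (Nat.factorial n : ℝ) := by
        rw [mul_pow]; ring

lemma summable_term (hz : 0 ≤ z) {S : Set Pt} (hk : 0 < k)
    (hSb : Bornology.IsBounded S) (q : Fin 3) :
    Summable (fun n : ℕ => z ^ n / (Nat.factorial n : ℝ) * In k α S q n) :=
  Summable.of_nonneg_of_le (fun n => term_nonneg hz q n)
    (fun n => term_le hz hk hSb q n)
    (Real.summable_pow_div_factorial (z * (2 * (volume S).toReal)))

lemma ZGen_le_exp (hz : 0 ≤ z) {S : Set Pt} (hk : 0 < k)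
    (hSb : Bornology.IsBounded S) (q : Fin 3) :
    ZGen k α z S (typeOrients q) ≤ Real.exp (z * (2 * (volume S).toReal)) := by
  rw [ZGen_eq_tsum_In, ← exp_tsum]
  exact Summable.tsum_le_tsum (term_le hz hk hSb q) (summable_term hz hk hSb q)
    (Real.summable_pow_div_factorial _)

lemma In_ge_prod (hk : 1 < k) (hα : α ≤ 1) {S : Set Pt}
    (hSb : Bornology.IsBounded S) (q : Fin 3) :
    ∀ n : ℕ, (∀ m : ℕ, m < n → 16 * k ^ 2 * m ≤ 2 * (volume S).toReal) →
      ∏ m ∈ Finset.range n, (2 * (volume S).toReal - 16 * k ^ 2 * m) ≤ In k α S q n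
  | 0, _ => by rw [In_zero]; simp
  | (n+1), h => by
      have hrec := In_ge_prod hk hα hSb q n
        (fun m hm => h m (lt_trans hm (Nat.lt_succ_self n)))
      have hnn : 0 ≤ 2 * (volume S).toReal - 16 * k ^ 2 * n := by
        have := h n (Nat.lt_succ_self n)
        linarith
      calc ∏ m ∈ Finset.range (n+1), (2 * (volume S).toReal - 16 * k ^ 2 * m)
          = (∏ m ∈ Finset.range n, (2 * (volume S).toReal - 16 * k ^ 2 * m)) *
            (2 * (volume S).toReal - 16 * k ^ 2 * n) := by
            rw [Finset.prod_range_succ]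
        _ ≤ In k α S q n * (2 * (volume S).toReal - 16 * k ^ 2 * n) :=
            mul_le_mul_of_nonneg_right hrec hnn
        _ = (2 * (volume S).toReal - 16 * k ^ 2 * n) * In k α S q n := by ring
        _ ≤ In k α S q (n+1) := In_succ_ge hk hα hSb q n

lemma ZGen_ge_pow (hk : 1 < k) (hα : α ≤ 1) (hz : 0 ≤ z) {S : Set Pt}
    (hSb : Bornology.IsBounded S) (q : Fin 3) :
    (1 + z * (16 * k ^ 2)) ^
        (Nat.floor (2 * (volume S).toReal / (16 * k ^ 2))) ≤
      ZGen k α z S (typeOrients q) := by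
  have h0 : (0:ℝ) < k := lt_trans one_pos hk
  set a : ℝ := 16 * k ^ 2 with ha_def
  set L : ℝ := 2 * (volume S).toReal with hL_def
  have ha : 0 < a := by positivity
  have hL : 0 ≤ L := by positivity
  set N : ℕ := Nat.floor (L / a) with hN_def
  have hNle : (N:ℝ) * a ≤ L := by
    have h1 : (N:ℝ) ≤ L / a := Nat.floor_le (by positivity)
    calc (N:ℝ) * a ≤ (L / a) * a := mul_le_mul_of_nonneg_right h1 ha.le
      _ = L := by field_simp
  have hps : ∀ n ∈ Finset.range (N+1),
      (z * a) ^ n * (N.choose n : ℝ) ≤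
        z ^ n / (Nat.factorial n : ℝ) * In k α S q n := by
    intro n hn
    rw [Finset.mem_range, Nat.lt_succ_iff] at hn
    have h1 : ∀ m : ℕ, m < n → 16 * k ^ 2 * (m:ℝ) ≤ 2 * (volume S).toReal := by
      intro m hm
      have hmN : (m:ℝ) ≤ (N:ℝ) := by
        exact_mod_cast le_trans (le_of_lt hm) hn
      calc 16 * k ^ 2 * (m:ℝ) = (m:ℝ) * a := by rw [ha_def]; ring
        _ ≤ (N:ℝ) * a := mul_le_mul_of_nonneg_right hmN ha.le
        _ ≤ L := hNle
  -- descending factorial lower bound for the product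
    have h3 : a ^ n * (N.descFactorial n : ℝ) ≤
        ∏ m ∈ Finset.range n, (L - a * m) := by
      have hdf : (N.descFactorial n : ℝ) =
          ∏ m ∈ Finset.range n, ((N - m : ℕ) : ℝ) := by
        rw [Nat.descFactorial_eq_prod_range]
        push_cast [Nat.cast_prod]
        rfl
      calc a ^ n * (N.descFactorial n : ℝ)
          = ∏ m ∈ Finset.range n, (a * ((N - m : ℕ) : ℝ)) := by
            rw [hdf, Finset.prod_mul_distrib, Finset.prod_const, Finset.card_range]
        _ ≤ ∏ m ∈ Finset.range n, (L - a * m) := by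
            apply Finset.prod_le_prod
            · intro m _
              positivity
            · intro m hm
              rw [Finset.mem_range] at hm
              have hmN : m ≤ N := le_trans (Nat.le_of_lt hm) hn
              rw [Nat.cast_sub hmN]
              have : a * ((N:ℝ) - m) = (N:ℝ) * a - a * m := by ring
              rw [this]
              have := hNle
              linarith
    have h2 := In_ge_prod hk hα hSb q n h1
    have h4 : a ^ n * (N.descFactorial n : ℝ) ≤ In k α S q n := by
      refine le_trans h3 (le_trans (le_of_eq ?_) h2)
      apply Finset.prod_congr rfl
      intro m _
      rw [ha_def, hL_def]
    have h5 : (N.descFactorial n : ℝ) =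
        (Nat.factorial n : ℝ) * (N.choose n : ℝ) := by
      exact_mod_cast congrArg (fun t : ℕ => (t:ℝ)) (Nat.descFactorial_eq_factorial_mul_choose N n)
    have hfac : (0:ℝ) < (Nat.factorial n : ℝ) := by
      exact_mod_cast Nat.factorial_pos n
    calc (z * a) ^ n * (N.choose n : ℝ)
        = z ^ n / (Nat.factorial n : ℝ) *
            (a ^ n * ((Nat.factorial n : ℝ) * (N.choose n : ℝ))) := by
          rw [mul_pow]
          field_simp
      _ = z ^ n / (Nat.factorial n : ℝ) * (a ^ n * (N.descFactorial n : ℝ)) := by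
          rw [h5]
      _ ≤ z ^ n / (Nat.factorial n : ℝ) * In k α S q n := by
          apply mul_le_mul_of_nonneg_left _ (by positivity)
          calc a ^ n * (N.descFactorial n : ℝ) ≤ a ^ n * (N.descFactorial n : ℝ) := le_refl _
            _ ≤ In k α S q n := h4
  calc (1 + z * a) ^ N
      = ∑ n ∈ Finset.range (N+1), (z * a) ^ n * (N.choose n : ℝ) := by
        rw [add_comm (1:ℝ) (z * a), add_pow]
        apply Finset.sum_congr rfl
        intro n _
        rw [one_pow, mul_one]
    _ ≤ ∑ n ∈ Finset.range (N+1),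
          z ^ n / (Nat.factorial n : ℝ) * In k α S q n := Finset.sum_le_sum hps
    _ ≤ ∑' n : ℕ, z ^ n / (Nat.factorial n : ℝ) * In k α S q n :=
        Summable.sum_le_tsum (Finset.range (N+1)) (fun n _ => term_nonneg hz q n)
          (summable_term hz h0 hSb q)
    _ = ZGen k α z S (typeOrients q) := (ZGen_eq_tsum_In z S q).symm

/-! ### the second-order lower bound -/

lemma prod_lower {a L : ℝ} (ha : 0 ≤ a) (hL : 0 ≤ L) :
    ∀ n : ℕ, (∀ m : ℕ, m < n → a * m ≤ L) →
      L ^ n - a * ((∑ i ∈ Finset.range n, (i:ℝ)) * L ^ (n - 1)) ≤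
        ∏ m ∈ Finset.range n, (L - a * m)
  | 0, _ => by simp
  | (n+1), h => by
      have hrec := prod_lower ha hL n (fun m hm => h m (lt_trans hm (Nat.lt_succ_self n)))
      have hnn : 0 ≤ L - a * n := by
        have := h n (Nat.lt_succ_self n)
        linarith
      have hstep : (L ^ n - a * ((∑ i ∈ Finset.range n, (i:ℝ)) * L ^ (n - 1))) *
          (L - a * n) ≤ ∏ m ∈ Finset.range (n+1), (L - a * m) := by
        rw [Finset.prod_range_succ]
        exact mul_le_mul_of_nonneg_right hrec hnn
      refine le_trans ?_ hstep
      have hsum : (∑ i ∈ Finset.range (n+1), (i:ℝ)) =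
          (∑ i ∈ Finset.range n, (i:ℝ)) + n := by
        rw [Finset.sum_range_succ]
      rw [hsum]
      rcases Nat.eq_zero_or_pos n with hn0 | hn1
      · subst hn0
        simp
      · have hpow : L ^ (n - 1) * L = L ^ n := by
          have : n - 1 + 1 = n := Nat.succ_pred_eq_of_pos hn1
          rw [← pow_succ, this]
        have hsnn : 0 ≤ (∑ i ∈ Finset.range n, (i:ℝ)) :=
          Finset.sum_nonneg fun i _ => Nat.cast_nonneg i
        have hpnn : (0:ℝ) ≤ L ^ (n - 1) := pow_nonneg hL _
        have hred : (n + 1) - 1 = n := rfl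
        rw [hred]
        have e1 : L ^ (n+1) = L ^ n * L := pow_succ L n
        have key : (L ^ n - a * ((∑ i ∈ Finset.range n, (i:ℝ)) * L ^ (n-1))) *
            (L - a * n) =
            L ^ n * L - a * (((∑ i ∈ Finset.range n, (i:ℝ)) + n) * L ^ n) +
              a * n * (a * ((∑ i ∈ Finset.range n, (i:ℝ)) * L ^ (n-1))) := by
          rw [← hpow]
          ring
        have hnonneg : 0 ≤ a * n * (a * ((∑ i ∈ Finset.range n, (i:ℝ)) * L ^ (n-1))) := by
          have : (0:ℝ) ≤ (n:ℝ) := Nat.cast_nonneg n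
          positivity
        linarith [key, e1]

lemma In_ge_second_order (hk : 1 < k) (hα : α ≤ 1) {S : Set Pt}
    (hSb : Bornology.IsBounded S) (q : Fin 3) (n : ℕ) :
    (2 * (volume S).toReal) ^ n -
        16 * k ^ 2 * ((∑ i ∈ Finset.range n, (i:ℝ)) *
          (2 * (volume S).toReal) ^ (n - 1)) ≤ In k α S q n := by
  have h0 : (0:ℝ) < k := lt_trans one_pos hk
  set a : ℝ := 16 * k ^ 2 with ha_def
  set L : ℝ := 2 * (volume S).toReal with hL_def
  have ha : 0 < a := by positivity
  have hL : 0 ≤ L := by positivity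
  by_cases hc : ∀ m : ℕ, m < n → a * m ≤ L
  · have h1 := prod_lower ha.le hL n hc
    refine le_trans h1 (le_trans (le_of_eq rfl) (In_ge_prod hk hα hSb q n ?_))
    intro m hm
    exact hc m hm
  · push_neg at hc
    obtain ⟨m, hm, hLm⟩ := hc
    have hn1 : 1 ≤ n := Nat.one_le_iff_ne_zero.mpr (by rintro rfl; exact absurd hm (Nat.not_lt_zero m))
    have hms : (m:ℝ) ≤ ∑ i ∈ Finset.range n, (i:ℝ) :=
      Finset.single_le_sum (fun i _ => Nat.cast_nonneg i) (Finset.mem_range.mpr hm)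
    have hLs : L ≤ a * (∑ i ∈ Finset.range n, (i:ℝ)) := by
      calc L ≤ a * m := hLm.le
        _ ≤ a * (∑ i ∈ Finset.range n, (i:ℝ)) := mul_le_mul_of_nonneg_left hms ha.le
    have hpow : L ^ n = L * L ^ (n - 1) := by
      have h := pow_succ L (n - 1)
      rw [Nat.sub_add_cancel hn1] at h
      rw [h]
      ring
    have hpnn : (0:ℝ) ≤ L ^ (n - 1) := pow_nonneg hL _
    have h2 : L ^ n - a * ((∑ i ∈ Finset.range n, (i:ℝ)) * L ^ (n - 1)) ≤ 0 := by
      rw [hpow]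
      nlinarith [mul_le_mul_of_nonneg_right hLs hpnn]
    exact le_trans h2 (In_nonneg q n)

lemma second_shift (z L : ℝ) (n : ℕ) :
    z ^ (n+2) / (Nat.factorial (n+2) : ℝ) *
      ((∑ i ∈ Finset.range (n+2), (i:ℝ)) * L ^ ((n+2) - 1)) =
    z ^ 2 * L / 2 * ((z * L) ^ n / (Nat.factorial n : ℝ)) := by
  have hs : (∑ i ∈ Finset.range (n+2), (i:ℝ)) = ((n:ℝ)+2) * ((n:ℝ)+1) / 2 := by
    have h := Finset.sum_range_id_mul_two (n+2)
    have h2 : ((∑ i ∈ Finset.range (n+2), i : ℕ) : ℝ) * 2 =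
        ((n:ℝ)+2) * ((n:ℝ)+1) := by
      exact_mod_cast congrArg (fun t : ℕ => (t:ℝ)) h
    have h3 : (∑ i ∈ Finset.range (n+2), (i:ℝ)) =
        ((∑ i ∈ Finset.range (n+2), i : ℕ) : ℝ) := by
      rw [Nat.cast_sum]
    linarith
  have hf : (Nat.factorial (n+2) : ℝ) = ((n:ℝ)+2) * ((n:ℝ)+1) * (Nat.factorial n : ℝ) := by
    rw [Nat.factorial_succ, Nat.factorial_succ]
    push_cast
    ring
  have hLp : L ^ ((n+2) - 1) = L * L ^ n := by
    have he : (n+2) - 1 = n + 1 := rfl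
    rw [he, pow_succ]
    ring
  rw [hs, hf, hLp, mul_pow]
  have hfac : (Nat.factorial n : ℝ) ≠ 0 := by
    exact_mod_cast (Nat.factorial_pos n).ne'
  have h1 : ((n:ℝ) + 2) ≠ 0 := by positivity
  have h2 : ((n:ℝ) + 1) ≠ 0 := by positivity
  field_simp
  ring

lemma summable_second (z L : ℝ) :
    Summable (fun n : ℕ => z ^ n / (Nat.factorial n : ℝ) *
      ((∑ i ∈ Finset.range n, (i:ℝ)) * L ^ (n - 1))) := by
  apply (summable_nat_add_iff 2).mp
  have heq : (fun n : ℕ => z ^ (n+2) / (Nat.factorial (n+2) : ℝ) *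
      ((∑ i ∈ Finset.range (n+2), (i:ℝ)) * L ^ ((n+2) - 1))) =
      fun n => z ^ 2 * L / 2 * ((z * L) ^ n / (Nat.factorial n : ℝ)) :=
    funext fun n => second_shift z L n
  rw [heq]
  exact (Real.summable_pow_div_factorial (z*L)).mul_left _

lemma tsum_second (z L : ℝ) :
    ∑' n : ℕ, z ^ n / (Nat.factorial n : ℝ) *
        ((∑ i ∈ Finset.range n, (i:ℝ)) * L ^ (n - 1)) =
      z ^ 2 * L / 2 * Real.exp (z * L) := by
  have hsum := summable_second z L
  rw [Summable.tsum_eq_zero_add hsum]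
  have h0 : z ^ 0 / (Nat.factorial 0 : ℝ) *
      ((∑ i ∈ Finset.range 0, (i:ℝ)) * L ^ (0 - 1)) = 0 := by simp
  rw [h0, zero_add]
  rw [Summable.tsum_eq_zero_add ((summable_nat_add_iff 1).mpr hsum)]
  have h1 : z ^ (0+1) / (Nat.factorial (0+1) : ℝ) *
      ((∑ i ∈ Finset.range (0+1), (i:ℝ)) * L ^ ((0+1) - 1)) = 0 := by simp
  rw [h1, zero_add]
  have h2 : ∀ n : ℕ, z ^ (n+1+1) / (Nat.factorial (n+1+1) : ℝ) *
      ((∑ i ∈ Finset.range (n+1+1), (i:ℝ)) * L ^ ((n+1+1) - 1)) =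
      z ^ 2 * L / 2 * ((z * L) ^ n / (Nat.factorial n : ℝ)) :=
    fun n => second_shift z L n
  rw [tsum_congr h2, tsum_mul_left, exp_tsum]

lemma ZGen_ge_exp (hk : 1 < k) (hα : α ≤ 1) (hz : 0 ≤ z) {S : Set Pt}
    (hSb : Bornology.IsBounded S) (q : Fin 3) :
    (1 - 16 * k ^ 2 * z ^ 2 * (volume S).toReal) *
        Real.exp (z * (2 * (volume S).toReal)) ≤ ZGen k α z S (typeOrients q) := by
  have h0 : (0:ℝ) < k := lt_trans one_pos hk
  have hg_le : ∀ n : ℕ,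
      (z * (2 * (volume S).toReal)) ^ n / (Nat.factorial n : ℝ) -
        16 * k ^ 2 * (z ^ n / (Nat.factorial n : ℝ) *
          ((∑ i ∈ Finset.range n, (i:ℝ)) * (2 * (volume S).toReal) ^ (n - 1))) ≤
      z ^ n / (Nat.factorial n : ℝ) * In k α S q n := by
    intro n
    have h1 := In_ge_second_order hk hα hSb q n
    have h2 : (0:ℝ) ≤ z ^ n / (Nat.factorial n : ℝ) := by positivity
    have h3 := mul_le_mul_of_nonneg_left h1 h2
    calc (z * (2 * (volume S).toReal)) ^ n / (Nat.factorial n : ℝ) -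
          16 * k ^ 2 * (z ^ n / (Nat.factorial n : ℝ) *
            ((∑ i ∈ Finset.range n, (i:ℝ)) * (2 * (volume S).toReal) ^ (n - 1)))
        = z ^ n / (Nat.factorial n : ℝ) *
            ((2 * (volume S).toReal) ^ n - 16 * k ^ 2 *
              ((∑ i ∈ Finset.range n, (i:ℝ)) * (2 * (volume S).toReal) ^ (n - 1))) := by
          rw [mul_pow]
          ring
      _ ≤ z ^ n / (Nat.factorial n : ℝ) * In k α S q n := h3
  have hsum1 : Summable (fun n : ℕ =>
      (z * (2 * (volume S).toReal)) ^ n / (Nat.factorial n : ℝ)) :=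
    Real.summable_pow_div_factorial _
  have hsum2 : Summable (fun n : ℕ => 16 * k ^ 2 * (z ^ n / (Nat.factorial n : ℝ) *
      ((∑ i ∈ Finset.range n, (i:ℝ)) * (2 * (volume S).toReal) ^ (n - 1)))) :=
    (summable_second z (2 * (volume S).toReal)).mul_left _
  calc (1 - 16 * k ^ 2 * z ^ 2 * (volume S).toReal) *
        Real.exp (z * (2 * (volume S).toReal))
      = Real.exp (z * (2 * (volume S).toReal)) -
          16 * k ^ 2 * (z ^ 2 * (2 * (volume S).toReal) / 2 *
            Real.exp (z * (2 * (volume S).toReal))) := by ring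
    _ = ∑' n : ℕ, ((z * (2 * (volume S).toReal)) ^ n / (Nat.factorial n : ℝ) -
          16 * k ^ 2 * (z ^ n / (Nat.factorial n : ℝ) *
            ((∑ i ∈ Finset.range n, (i:ℝ)) * (2 * (volume S).toReal) ^ (n - 1)))) := by
        rw [Summable.tsum_sub hsum1 hsum2, exp_tsum, tsum_mul_left, tsum_second]
    _ ≤ ∑' n : ℕ, z ^ n / (Nat.factorial n : ℝ) * In k α S q n :=
        Summable.tsum_le_tsum hg_le (hsum1.sub hsum2) (summable_term hz h0 hSb q)
    _ = ZGen k α z S (typeOrients q) := (ZGen_eq_tsum_In z S q).symm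

lemma ZGen_ge_one (hz : 0 ≤ z) {S : Set Pt} (hk : 0 < k)
    (hSb : Bornology.IsBounded S) (q : Fin 3) :
    1 ≤ ZGen k α z S (typeOrients q) := by
  rw [ZGen_eq_tsum_In]
  have h := Summable.le_tsum (summable_term (k:=k) (α:=α) hz hk hSb q) 0
    (fun n _ => term_nonneg (k:=k) (α:=α) hz q n)
  simpa [In_zero] using h

end Aux2

end

/-- **Mayer expansion, single type.**  There are constants `c, C > 0` such that
if `z k² ≤ c` then, for every bounded measurable `S` and every type `q`, the
single-type partition function `Z^q(S)` is positive and
`log Z^q(S) = 2|S| z (1 + O(z k²))`. -/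
theorem mayer_single_type :
    ∃ c C : ℝ, 0 < c ∧ 0 < C ∧
      ∀ k α z : ℝ, 1 < k → α ∈ Set.Ioc (3/4 : ℝ) 1 → 0 < z → z * k ^ 2 ≤ c →
        ∀ S : Set Pt, Bornology.IsBounded S → MeasurableSet S → ∀ q : Fin 3,
          0 < ZGen k α z S (typeOrients q) ∧
          |Real.log (ZGen k α z S (typeOrients q)) - 2 * z * (volume S).toReal| ≤
            C * z ^ 2 * k ^ 2 * (volume S).toReal := by
  refine ⟨1/16, 1024, by norm_num, by norm_num, ?_⟩
  intro k α z hk hα hz hzk S hSb _hSmeas q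
  have h0k : (0:ℝ) < k := lt_trans one_pos hk
  have hα1 : α ≤ 1 := hα.2
  set V : ℝ := (volume S).toReal with hV_def
  have hV0 : 0 ≤ V := ENNReal.toReal_nonneg
  have hZ1 : 1 ≤ ZGen k α z S (typeOrients q) := ZGen_ge_one hz.le h0k hSb q
  have hZpos : 0 < ZGen k α z S (typeOrients q) := lt_of_lt_of_le zero_lt_one hZ1
  refine ⟨hZpos, ?_⟩
  -- upper bound
  have hup : Real.log (ZGen k α z S (typeOrients q)) ≤ 2 * z * V := by
    have h1 := ZGen_le_exp (α := α) hz.le h0k hSb q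
    calc Real.log (ZGen k α z S (typeOrients q))
        ≤ Real.log (Real.exp (z * (2 * V))) := Real.log_le_log hZpos h1
      _ = z * (2 * V) := Real.log_exp _
      _ = 2 * z * V := by ring
  -- lower bound
  have hlow : 2 * z * V - 1024 * z ^ 2 * k ^ 2 * V ≤
      Real.log (ZGen k α z S (typeOrients q)) := by
    by_cases hcase : 16 * k ^ 2 * z ^ 2 * V ≤ 1/2
    · -- small `u`: second-order bound
      have hZ2 := ZGen_ge_exp hk hα1 hz.le hSb q
      have hu : 0 ≤ 16 * k ^ 2 * z ^ 2 * V := by positivity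
      have h1u : (0:ℝ) < 1 - 16 * k ^ 2 * z ^ 2 * V := by linarith
      have hlog : Real.log ((1 - 16 * k ^ 2 * z ^ 2 * V) * Real.exp (z * (2 * V))) ≤
          Real.log (ZGen k α z S (typeOrients q)) :=
        Real.log_le_log (by positivity) hZ2
      rw [Real.log_mul (ne_of_gt h1u) (Real.exp_pos _).ne', Real.log_exp] at hlog
      have hlog1 : -(2 * (16 * k ^ 2 * z ^ 2 * V)) ≤
          Real.log (1 - 16 * k ^ 2 * z ^ 2 * V) := by
        have hexp : Real.exp (-(2 * (16 * k ^ 2 * z ^ 2 * V))) ≤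
            1 - 16 * k ^ 2 * z ^ 2 * V := by
          have he : Real.exp (-(2 * (16 * k ^ 2 * z ^ 2 * V))) *
              Real.exp (2 * (16 * k ^ 2 * z ^ 2 * V)) = 1 := by
            rw [← Real.exp_add]
            simp
          have h2u : 2 * (16 * k ^ 2 * z ^ 2 * V) + 1 ≤
              Real.exp (2 * (16 * k ^ 2 * z ^ 2 * V)) :=
            Real.add_one_le_exp _
          have hepos : 0 < Real.exp (-(2 * (16 * k ^ 2 * z ^ 2 * V))) := Real.exp_pos _
          nlinarith [hepos, h2u, he, hu, hcase]
        calc -(2 * (16 * k ^ 2 * z ^ 2 * V))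
            = Real.log (Real.exp (-(2 * (16 * k ^ 2 * z ^ 2 * V)))) :=
              (Real.log_exp _).symm
          _ ≤ Real.log (1 - 16 * k ^ 2 * z ^ 2 * V) :=
              Real.log_le_log (Real.exp_pos _) hexp
      have hpos2 : 0 ≤ z ^ 2 * k ^ 2 * V := by positivity
      linarith [hlog, hlog1, hpos2]
    · -- large `u`: product bound
      push_neg at hcase
      have hZ2 := ZGen_ge_pow hk hα1 hz.le hSb q
      have hz2 : 1/32 < z ^ 2 * k ^ 2 * V := by linarith
      have h16 : 16 * (z * k ^ 2) ≤ 1 := by linarith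
      have hza0 : 0 ≤ z * (16 * k ^ 2) := by positivity
      have hza1 : z * (16 * k ^ 2) ≤ 1 := by linarith
      set N : ℕ := Nat.floor (2 * V / (16 * k ^ 2)) with hN_def
      have hNlb : 2 * V / (16 * k ^ 2) - 1 ≤ (N:ℝ) := by
        have := Nat.lt_floor_add_one (2 * V / (16 * k ^ 2))
        linarith
      have hbase : (0:ℝ) < 1 + z * (16 * k ^ 2) := by positivity
      have hlogZ : (N:ℝ) * Real.log (1 + z * (16 * k ^ 2)) ≤
          Real.log (ZGen k α z S (typeOrients q)) := by
        calc (N:ℝ) * Real.log (1 + z * (16 * k ^ 2))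
            = Real.log ((1 + z * (16 * k ^ 2)) ^ N) := by rw [Real.log_pow]
          _ ≤ Real.log (ZGen k α z S (typeOrients q)) :=
              Real.log_le_log (by positivity) hZ2
      -- log(1+x) ≥ x - x²
      have hxlog : z * (16 * k ^ 2) - (z * (16 * k ^ 2)) ^ 2 ≤
          Real.log (1 + z * (16 * k ^ 2)) := by
        have h1 : Real.log (1/(1 + z * (16 * k ^ 2))) ≤
            1/(1 + z * (16 * k ^ 2)) - 1 :=
          Real.log_le_sub_one_of_pos (by positivity)
        have h2 : Real.log (1/(1 + z * (16 * k ^ 2))) =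
            - Real.log (1 + z * (16 * k ^ 2)) := by
          rw [one_div, Real.log_inv]
        have h3 : z * (16 * k ^ 2) / (1 + z * (16 * k ^ 2)) ≤
            Real.log (1 + z * (16 * k ^ 2)) := by
          rw [h2] at h1
          have h4 : 1 - 1/(1 + z * (16 * k ^ 2)) =
              z * (16 * k ^ 2) / (1 + z * (16 * k ^ 2)) := by
            field_simp
            ring
          linarith
        have h5 : z * (16 * k ^ 2) - (z * (16 * k ^ 2)) ^ 2 ≤
            z * (16 * k ^ 2) / (1 + z * (16 * k ^ 2)) := by
          rw [le_div_iff₀ hbase]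
          nlinarith
        linarith
      have hzaq : 0 ≤ z * (16 * k ^ 2) - (z * (16 * k ^ 2)) ^ 2 := by nlinarith
      have hN0 : (0:ℝ) ≤ (N:ℝ) := Nat.cast_nonneg N
      have hchain : (2 * V / (16 * k ^ 2) - 1) *
          (z * (16 * k ^ 2) - (z * (16 * k ^ 2)) ^ 2) ≤
          Real.log (ZGen k α z S (typeOrients q)) := by
        calc (2 * V / (16 * k ^ 2) - 1) *
              (z * (16 * k ^ 2) - (z * (16 * k ^ 2)) ^ 2)
            ≤ (N:ℝ) * (z * (16 * k ^ 2) - (z * (16 * k ^ 2)) ^ 2) :=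
              mul_le_mul_of_nonneg_right hNlb hzaq
          _ ≤ (N:ℝ) * Real.log (1 + z * (16 * k ^ 2)) :=
              mul_le_mul_of_nonneg_left hxlog hN0
          _ ≤ Real.log (ZGen k α z S (typeOrients q)) := hlogZ
      have hexpand : (2 * V / (16 * k ^ 2) - 1) *
          (z * (16 * k ^ 2) - (z * (16 * k ^ 2)) ^ 2) =
          2 * z * V - 32 * V * z ^ 2 * k ^ 2 - z * (16 * k ^ 2) +
            (z * (16 * k ^ 2)) ^ 2 := by
        field_simp
        ring
      have hsq : 0 ≤ (z * (16 * k ^ 2)) ^ 2 := sq_nonneg _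
      rw [hexpand] at hchain
      linarith [hchain, hz2, h16, hsq]
  rw [abs_le]
  constructor
  · linarith
  · linarith
end

section
/- (Pebble type exclusivity) Let k≥1 and α∈(0,1]. If p=(x,o) and p'=(y,o') are two plates whose types are different (o is of type i, o' is of type i', i≠i'), and if |x_j − y_j| ≤ k^α/2 for each coordinate j∈{1,2,3} (in particular, if x and y lie in a common axis-aligned cube of side k^α/2), then the supports intersect: R_p ∩ R_{p'} ≠ ∅. Consequently, in any configuration of pairwise non-intersecting plates, all plates whose centers lie in a common cube of side k^α/2 have the same type. -/
open MeasureTheory Filter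

attribute [local instance] Classical.propDecidable

/-- **Pebble type exclusivity.**  For `k ≥ 1` and `α ∈ (0,1]`: two plates of
different types whose centers are within `k^α/2` of each other in every
coordinate have intersecting supports.  Consequently, in a configuration of
pairwise non-intersecting plates, all plates whose centers lie in a common
axis-aligned cube of side `k^α/2` have the same type. -/
theorem pebble_type_exclusivity :
    ∀ k α : ℝ, 1 ≤ k → α ∈ Set.Ioc (0 : ℝ) 1 →
      (∀ p p' : Plate, p.2.1 ≠ p'.2.1 →
        (∀ j, |p.1 j - p'.1 j| ≤ k ^ α / 2) →
        (plSupport k α p ∩ plSupport k α p').Nonempty) ∧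
      (∀ P : Finset Plate, (∀ p ∈ P, ∀ p' ∈ P, p ≠ p' → ¬ Intersects k α p p') →
        ∀ c : Pt, ∀ p ∈ P, ∀ p' ∈ P,
          p.1 ∈ cube c (k ^ α / 2) → p'.1 ∈ cube c (k ^ α / 2) → p.2.1 = p'.2.1) := by
  intro k α hk hα
  obtain ⟨hα0, hα1⟩ := hα
  have hka1 : (1:ℝ) ≤ k ^ α := Real.one_le_rpow hk hα0.le
  have hkak : k ^ α ≤ k := by
    calc k ^ α ≤ k ^ (1:ℝ) := Real.rpow_le_rpow_of_exponent_le hk hα1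
    _ = k := Real.rpow_one k
  have side_nonneg : ∀ (o : Orient) (j : Fin 3), 0 ≤ sideLen k α o j := by
    intro o j; unfold sideLen; split_ifs <;> linarith
  have side_ge : ∀ (o : Orient) (j : Fin 3), j ≠ o.1 → k ^ α ≤ sideLen k α o j := by
    intro o j h; unfold sideLen
    split_ifs with h1 h2 h3 h4
    · exact absurd h1 h
    · linarith
    · linarith
    · linarith
    · linarith
  have main : ∀ p p' : Plate, p.2.1 ≠ p'.2.1 →
      (∀ j, |p.1 j - p'.1 j| ≤ k ^ α / 2) →
      (plSupport k α p ∩ plSupport k α p').Nonempty := by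
    intro p p' hne hd
    have key : ∀ j, |p.1 j - p'.1 j| ≤ (sideLen k α p.2 j + sideLen k α p'.2 j) / 2 := by
      intro j
      rcases eq_or_ne j p.2.1 with h | h
      · have h' : j ≠ p'.2.1 := by rw [h]; exact hne
        have := side_ge p'.2 j h'
        have := side_nonneg p.2 j
        have := hd j
        linarith
      · have := side_ge p.2 j h
        have := side_nonneg p'.2 j
        have := hd j
        linarith
    refine ⟨fun j => max (p.1 j - sideLen k α p.2 j / 2)
        (p'.1 j - sideLen k α p'.2 j / 2), ?_, ?_⟩
    · intro j
      obtain ⟨h1, h2⟩ := abs_le.mp (key j)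
      have hs := side_nonneg p.2 j
      have hs' := side_nonneg p'.2 j
      have hzl : p.1 j - sideLen k α p.2 j / 2 ≤
          max (p.1 j - sideLen k α p.2 j / 2) (p'.1 j - sideLen k α p'.2 j / 2) :=
        le_max_left _ _
      have hzu : max (p.1 j - sideLen k α p.2 j / 2) (p'.1 j - sideLen k α p'.2 j / 2) ≤
          p.1 j + sideLen k α p.2 j / 2 := max_le (by linarith) (by linarith)
      exact abs_le.mpr ⟨by linarith, by linarith⟩
    · intro j
      obtain ⟨h1, h2⟩ := abs_le.mp (key j)
      have hs := side_nonneg p.2 j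
      have hs' := side_nonneg p'.2 j
      have hzl : p'.1 j - sideLen k α p'.2 j / 2 ≤
          max (p.1 j - sideLen k α p.2 j / 2) (p'.1 j - sideLen k α p'.2 j / 2) :=
        le_max_right _ _
      have hzu : max (p.1 j - sideLen k α p.2 j / 2) (p'.1 j - sideLen k α p'.2 j / 2) ≤
          p'.1 j + sideLen k α p'.2 j / 2 := max_le (by linarith) (by linarith)
      exact abs_le.mpr ⟨by linarith, by linarith⟩
  refine ⟨main, ?_⟩
  intro P hP c p hp p' hp' hc hc'
  by_contra hne
  have hpp' : p ≠ p' := by rintro rfl; exact hne rfl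
  refine hP p hp p' hp' hpp' (main p p' hne fun j => ?_)
  have h1 := hc j
  have h2 := hc' j
  have h3 : |c j - p'.1 j| = |p'.1 j - c j| := abs_sub_comm _ _
  calc |p.1 j - p'.1 j| ≤ |p.1 j - c j| + |c j - p'.1 j| := abs_sub_le _ _ _
  _ ≤ k ^ α / 2 := by rw [h3]; linarith
end

section
/- (Property (*1): typical pebbles in a common tile have equal types) Let k>1 and α∈(3/4,1] be such that k^{1−α} is a positive integer, let Δ be a cube of side k/2 partitioned into k^{3(1−α)} pebbles (axis-aligned cubes of side k^α/2), and let P be a finite configuration of pairwise non-intersecting plates with centers in Δ. Call a pebble typical of type i if it contains the centers of at least two plates of P of type i with different orientations. If two pebbles δ and δ' both lie in a common tile of Δ (for some direction d∈{1,2,3}, a tile is the k/2 × k/2 × k^α/2 slab of Δ consisting of all pebbles in a fixed layer orthogonal to axis d), and δ is typical of type i while δ' is typical of type i', then i = i'. -/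
open MeasureTheory Filter

attribute [local instance] Classical.propDecidable

section Aux

variable {k α : ℝ}

lemma fin3_tri : ∀ (i j : Fin 3), j = i ∨ j = i + 1 ∨ j = i + 2 := by decide

lemma sideLen_ge_one (hk : 1 ≤ k) (hK : 1 ≤ k ^ α) (o : Orient) (j : Fin 3) :
    1 ≤ sideLen k α o j := by
  unfold sideLen; split_ifs <;> linarith

lemma intersects_of_close (hk : 1 ≤ k) (hK : 1 ≤ k ^ α) (p q : Plate)
    (h : ∀ j, |p.1 j - q.1 j| ≤ (sideLen k α p.2 j + sideLen k α q.2 j) / 2) :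
    Intersects k α p q := by
  refine ⟨fun j => max (p.1 j - sideLen k α p.2 j / 2) (q.1 j - sideLen k α q.2 j / 2), ?_, ?_⟩ <;>
      intro j <;>
      have hle1 : p.1 j - sideLen k α p.2 j / 2 ≤
        max (p.1 j - sideLen k α p.2 j / 2) (q.1 j - sideLen k α q.2 j / 2) := le_max_left _ _ <;>
      have hle2 : q.1 j - sideLen k α q.2 j / 2 ≤
        max (p.1 j - sideLen k α p.2 j / 2) (q.1 j - sideLen k α q.2 j / 2) := le_max_right _ _ <;>
  · have h1 := sideLen_ge_one hk hK p.2 j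
    have h2 := sideLen_ge_one hk hK q.2 j
    have h3 := abs_le.mp (h j)
    rw [abs_le]
    have : max (p.1 j - sideLen k α p.2 j / 2) (q.1 j - sideLen k α q.2 j / 2)
        ≤ min (p.1 j + sideLen k α p.2 j / 2) (q.1 j + sideLen k α q.2 j / 2) := by
      apply max_le <;> apply le_min <;> linarith [h3.1, h3.2]
    have h4 := le_trans this (min_le_left _ _)
    have h5 := le_trans this (min_le_right _ _)
    constructor <;> linarith

lemma exists_sep (hk : 1 ≤ k) (hK : 1 ≤ k ^ α) {p q : Plate}
    (h : ¬ Intersects k α p q) :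
    ∃ j, (sideLen k α p.2 j + sideLen k α q.2 j) / 2 < |p.1 j - q.1 j| := by
  by_contra hc
  push_neg at hc
  exact h (intersects_of_close hk hK p q hc)

lemma sideLen_eq_one {i j : Fin 3} (b : Bool) (h : j = i) :
    sideLen k α (i, b) j = 1 := by
  simp [sideLen, h]

lemma sideLen_thin {i j : Fin 3} {b : Bool}
    (h2 : j = i + (if b then 1 else 2)) (h1 : j ≠ i) :
    sideLen k α (i, b) j = k ^ α := by
  subst h2
  cases b <;> fin_cases i <;> simp_all [sideLen]

lemma sideLen_not_thin {i j : Fin 3} {b : Bool}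
    (h1 : j ≠ i) (h2 : j ≠ i + (if b then 1 else 2)) :
    sideLen k α (i, b) j = k := by
  cases b <;> fin_cases i <;> fin_cases j <;> simp_all [sideLen]

lemma axes_claim : ∀ i i' d : Fin 3, i ≠ i' → ∃ b b' : Bool,
    ∀ j : Fin 3, (j = i ∨ j = i + (if b then 1 else 2)) →
      (j = i' ∨ j = i' + (if b' then 1 else 2)) → j = d := by decide

end Aux


/-- **Property (*1): typical pebbles in a common tile have equal types.**
Let `k^{1-α} = M` be a positive integer and let `Δ` be the cube of corner `c`
and side `k/2`, partitioned into the `M³` pebbles of side `k^α/2`.  If `P` is a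
configuration of pairwise non-intersecting plates with centers in `Δ`, and two
pebbles lying in a common tile (i.e. in the same layer orthogonal to some
direction `d`) are typical of types `i` and `i'`, then `i = i'`. -/
theorem typical_pebbles_in_common_tile :
    ∀ k α : ℝ, 1 < k → α ∈ Set.Ioc (3/4 : ℝ) 1 →
    ∀ M : ℕ, 0 < M → (M : ℝ) = k ^ (1 - α) →
    ∀ c : Pt, ∀ P : Finset Plate,
      (∀ p ∈ P, ∀ p' ∈ P, p ≠ p' → ¬ Intersects k α p p') →
      (∀ p ∈ P, ∀ j, c j ≤ p.1 j ∧ p.1 j ≤ c j + k / 2) →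
      ∀ v v' : Fin 3 → Fin M, ∀ i i' : Fin 3, ∀ d : Fin 3,
        v d = v' d → TypicalIn k α c P v i → TypicalIn k α c P v' i' → i = i' := by
  intro k α hk hα M hM hMk c P hP hΔ v v' i i' d hd hT hT'
  by_contra hne
  have hk1 : (1:ℝ) ≤ k := le_of_lt hk
  have hk0 : (0:ℝ) < k := by linarith
  have hα0 : 0 < α := by linarith [hα.1]
  have hK1 : 1 < k ^ α := by
    rw [Real.one_lt_rpow_iff_of_pos hk0]
    exact Or.inl ⟨hk, hα0⟩
  have hK : (1:ℝ) ≤ k ^ α := le_of_lt hK1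
  have extract : ∀ (w : Fin 3 → Fin M) (t : Fin 3), TypicalIn k α c P w t →
      ∀ b : Bool, ∃ p ∈ P, p.2 = (t, b) ∧ p.1 ∈ pebbleBox k α c w := by
    rintro w t ⟨p, hp, p', hp', hne2, ht, ht', hb, hb'⟩ b
    by_cases hpb : p.2.2 = b
    · exact ⟨p, hp, by rw [← ht, ← hpb], hb⟩
    · refine ⟨p', hp', ?_, hb'⟩
      have hx : p.2.2 ≠ p'.2.2 := by
        intro h
        exact hne2 (Prod.ext (ht.trans ht'.symm) h)
      have hbb : p'.2.2 = b := by
        revert hpb hx; cases b <;> cases p.2.2 <;> cases p'.2.2 <;> simp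
      rw [← ht', ← hbb]
  obtain ⟨b, b', hbb'⟩ := axes_claim i i' d hne
  obtain ⟨u, hu, hu2, huv⟩ := extract v i hT b
  obtain ⟨w, hw, hw2, hwv⟩ := extract v' i' hT' b'
  have huw : u ≠ w := by
    intro h
    rw [h, hw2] at hu2
    exact hne (congrArg Prod.fst hu2.symm)
  obtain ⟨j, hj⟩ := exists_sep hk1 hK (hP u hu w hw huw)
  have hdist : ∀ j, |u.1 j - w.1 j| ≤ k / 2 := by
    intro j
    have h1 := hΔ u hu j; have h2 := hΔ w hw j
    rw [abs_le]; constructor <;> linarith [h1.1, h1.2, h2.1, h2.2]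
  have hsu1 := sideLen_ge_one hk1 hK u.2 j
  have hsw1 := sideLen_ge_one hk1 hK w.2 j
  have hthinu : j = i ∨ j = i + (if b then 1 else 2) := by
    by_contra hcc
    push_neg at hcc
    have hval : sideLen k α u.2 j = k := by rw [hu2]; exact sideLen_not_thin hcc.1 hcc.2
    have := hdist j
    linarith
  have hthinw : j = i' ∨ j = i' + (if b' then 1 else 2) := by
    by_contra hcc
    push_neg at hcc
    have hval : sideLen k α w.2 j = k := by rw [hw2]; exact sideLen_not_thin hcc.1 hcc.2
    have := hdist j
    linarith
  have hjd : j = d := hbb' j hthinu hthinw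
  subst hjd
  simp only [pebbleBox, Set.mem_setOf_eq] at huv hwv
  have htile : |u.1 j - w.1 j| ≤ k ^ α / 2 := by
    have h1 := huv j
    have h2 := hwv j
    rw [← hd] at h2
    rw [abs_le]
    constructor <;> linarith [h1.1, h1.2, h2.1, h2.2]
  have hsum : 1 + k ^ α ≤ sideLen k α u.2 j + sideLen k α w.2 j := by
    by_cases hji : j = i
    · have e1 : sideLen k α u.2 j = 1 := by rw [hu2]; exact sideLen_eq_one b hji
      have hji' : j ≠ i' := fun h => hne (hji.symm.trans h)
      have e2 : sideLen k α w.2 j = k ^ α := by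
        rw [hw2]; exact sideLen_thin (hthinw.resolve_left hji') hji'
      linarith
    · have e1 : sideLen k α u.2 j = k ^ α := by
        rw [hu2]; exact sideLen_thin (hthinu.resolve_left hji) hji
      linarith
  linarith
end
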